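/- arXiv:1310.1520 — 4 statements merged into one kernel-verified Lean document; each statement's English description precedes it below -/
import Mathlib

section
/- The number of 312-avoiding indecomposable permutations in the symmetric group S_n is the Catalan number C_{n-1}. -/
set_option maxHeartbeats 1000000


/-- A permutation `π ∈ S_n` avoids the pattern 312 if there are no indices
`i < j < k` with `π j < π k < π i`. -/
def Avoids312 {n : ℕ} (π : Equiv.Perm (Fin n)) : Prop :=
  ¬ ∃ i j k : Fin n, i < j ∧ j < k ∧ π j < π k ∧ π k < π i

/-- `j` is a cut point of `π` (0-indexed): `j` is not the last position, and every
letter in positions `≤ j` is smaller than every letter in positions `> j`.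
This corresponds to the paper's cut points `1 ≤ j ≤ n - 1` (1-indexed). -/
def IsCutPoint {n : ℕ} (π : Equiv.Perm (Fin n)) (j : Fin n) : Prop :=
  (j : ℕ) + 1 < n ∧ ∀ i k : Fin n, i ≤ j → j < k → π i < π k

/-- A permutation is indecomposable if it has no cut point. -/
def Indecomposable {n : ℕ} (π : Equiv.Perm (Fin n)) : Prop :=
  ¬ ∃ j : Fin n, IsCutPoint π j

namespace Av312Aux

open Equiv Finset

/-- Forward map of `glue`. -/
def glueFun {a b : ℕ} (σ : Equiv.Perm (Fin a)) (τ : Equiv.Perm (Fin b))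
    (p : Fin (a + 1 + b)) : Fin (a + 1 + b) :=
  if h : (p : ℕ) < a then ⟨(σ ⟨p, h⟩).val + 1, by have := (σ ⟨p, h⟩).isLt; omega⟩
  else if h2 : (p : ℕ) = a then ⟨0, by omega⟩
  else ⟨(τ ⟨(p : ℕ) - a - 1, by have := p.isLt; omega⟩).val + a + 1, by
    have := (τ ⟨(p : ℕ) - a - 1, by have := p.isLt; omega⟩).isLt; omega⟩

lemma glueFun_lt {a b : ℕ} (σ : Equiv.Perm (Fin a)) (τ : Equiv.Perm (Fin b))
    (p : Fin (a + 1 + b)) (h : (p : ℕ) < a) :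
    (glueFun σ τ p : ℕ) = (σ ⟨p, h⟩ : ℕ) + 1 := by
  unfold glueFun; rw [dif_pos h]

lemma glueFun_eq {a b : ℕ} (σ : Equiv.Perm (Fin a)) (τ : Equiv.Perm (Fin b))
    (p : Fin (a + 1 + b)) (h : (p : ℕ) = a) : (glueFun σ τ p : ℕ) = 0 := by
  unfold glueFun; rw [dif_neg (by omega), dif_pos h]

lemma glueFun_gt {a b : ℕ} (σ : Equiv.Perm (Fin a)) (τ : Equiv.Perm (Fin b))
    (p : Fin (a + 1 + b)) (h : a < (p : ℕ)) :
    (glueFun σ τ p : ℕ) = (τ ⟨(p : ℕ) - a - 1, by have := p.isLt; omega⟩ : ℕ) + a + 1 := by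
  unfold glueFun; rw [dif_neg (by omega), dif_neg (by omega)]

lemma glueFun_injective {a b : ℕ} (σ : Equiv.Perm (Fin a)) (τ : Equiv.Perm (Fin b)) :
    Function.Injective (glueFun σ τ) := by
  intro p q hpq
  have hv : (glueFun σ τ p : ℕ) = (glueFun σ τ q : ℕ) := congrArg Fin.val hpq
  have hp := p.isLt; have hq := q.isLt
  rcases lt_trichotomy (p : ℕ) a with h1 | h1 | h1 <;>
    rcases lt_trichotomy (q : ℕ) a with h2 | h2 | h2
  · rw [glueFun_lt σ τ p h1, glueFun_lt σ τ q h2] at hv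
    have : σ ⟨p, h1⟩ = σ ⟨q, h2⟩ := Fin.ext (by omega)
    have := congrArg Fin.val (σ.injective this)
    exact Fin.ext this
  · rw [glueFun_lt σ τ p h1, glueFun_eq σ τ q h2] at hv; omega
  · rw [glueFun_lt σ τ p h1, glueFun_gt σ τ q h2] at hv
    have := (σ ⟨p, h1⟩).isLt; omega
  · rw [glueFun_eq σ τ p h1, glueFun_lt σ τ q h2] at hv; omega
  · exact Fin.ext (h1.trans h2.symm)
  · rw [glueFun_eq σ τ p h1, glueFun_gt σ τ q h2] at hv; omega
  · rw [glueFun_gt σ τ p h1, glueFun_lt σ τ q h2] at hv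
    have := (σ ⟨q, h2⟩).isLt; omega
  · rw [glueFun_gt σ τ p h1, glueFun_eq σ τ q h2] at hv; omega
  · rw [glueFun_gt σ τ p h1, glueFun_gt σ τ q h2] at hv
    have : τ ⟨(p : ℕ) - a - 1, by omega⟩ = τ ⟨(q : ℕ) - a - 1, by omega⟩ := Fin.ext (by omega)
    have := congrArg Fin.val (τ.injective this)
    simp only at this
    exact Fin.ext (by omega)

/-- Glue `σ` (values shifted by 1), the value 0, and `τ` (values shifted by `a+1`). -/
noncomputable def glue {a b : ℕ} (σ : Equiv.Perm (Fin a)) (τ : Equiv.Perm (Fin b)) :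
    Equiv.Perm (Fin (a + 1 + b)) :=
  Equiv.ofBijective (glueFun σ τ) (Finite.injective_iff_bijective.mp (glueFun_injective σ τ))

lemma glue_lt {a b : ℕ} (σ : Equiv.Perm (Fin a)) (τ : Equiv.Perm (Fin b))
    (p : Fin (a + 1 + b)) (h : (p : ℕ) < a) :
    (glue σ τ p : ℕ) = (σ ⟨p, h⟩ : ℕ) + 1 := glueFun_lt σ τ p h

lemma glue_eq {a b : ℕ} (σ : Equiv.Perm (Fin a)) (τ : Equiv.Perm (Fin b))
    (p : Fin (a + 1 + b)) (h : (p : ℕ) = a) : (glue σ τ p : ℕ) = 0 := glueFun_eq σ τ p h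

lemma glue_gt {a b : ℕ} (σ : Equiv.Perm (Fin a)) (τ : Equiv.Perm (Fin b))
    (p : Fin (a + 1 + b)) (h : a < (p : ℕ)) :
    (glue σ τ p : ℕ) = (τ ⟨(p : ℕ) - a - 1, by have := p.isLt; omega⟩ : ℕ) + a + 1 :=
  glueFun_gt σ τ p h

lemma glue_val_lt {a b : ℕ} (σ : Equiv.Perm (Fin a)) (τ : Equiv.Perm (Fin b))
    (p : ℕ) (hp : p < a) {h : p < a + 1 + b} :
    (glue σ τ ⟨p, h⟩ : ℕ) = (σ ⟨p, hp⟩ : ℕ) + 1 := glue_lt σ τ ⟨p, h⟩ hp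

lemma glue_val_eq {a b : ℕ} (σ : Equiv.Perm (Fin a)) (τ : Equiv.Perm (Fin b))
    (p : ℕ) (hp : p = a) {h : p < a + 1 + b} :
    (glue σ τ ⟨p, h⟩ : ℕ) = 0 := glue_eq σ τ ⟨p, h⟩ hp

lemma glue_val_gt {a b : ℕ} (σ : Equiv.Perm (Fin a)) (τ : Equiv.Perm (Fin b))
    (p : ℕ) (hp : a < p) {h : p < a + 1 + b} :
    (glue σ τ ⟨p, h⟩ : ℕ) = (τ ⟨p - a - 1, by omega⟩ : ℕ) + a + 1 := glue_gt σ τ ⟨p, h⟩ hp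

lemma glue_val_emb {a b : ℕ} (σ : Equiv.Perm (Fin a)) (τ : Equiv.Perm (Fin b))
    (j : Fin a) {h : (j : ℕ) < a + 1 + b} :
    (glue σ τ ⟨(j : ℕ), h⟩ : ℕ) = (σ j : ℕ) + 1 := by
  rw [glue_val_lt σ τ (j : ℕ) j.isLt]

lemma glue_val_shift {a b : ℕ} (σ : Equiv.Perm (Fin a)) (τ : Equiv.Perm (Fin b))
    (j : Fin b) {h : (j : ℕ) + a + 1 < a + 1 + b} :
    (glue σ τ ⟨(j : ℕ) + a + 1, h⟩ : ℕ) = (τ j : ℕ) + a + 1 := by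
  rw [glue_val_gt σ τ ((j : ℕ) + a + 1) (by omega)]
  have e : (⟨(j : ℕ) + a + 1 - a - 1, by omega⟩ : Fin b) = j :=
    Fin.ext (show (j : ℕ) + a + 1 - a - 1 = (j : ℕ) by omega)
  rw [e]

lemma glue_avoids {a b : ℕ} {σ : Equiv.Perm (Fin a)} {τ : Equiv.Perm (Fin b)}
    (hσ : Avoids312 σ) (hτ : Avoids312 τ) : Avoids312 (glue σ τ) := by
  rintro ⟨i, j, k, hij, hjk, hjv, hkv⟩
  rcases lt_trichotomy (i : ℕ) a with hi | hi | hi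
  · -- i before the 0; then k must be before, too
    have hk : (k : ℕ) < a := by
      rcases lt_trichotomy (k : ℕ) a with h | h | h
      · exact h
      · rw [Fin.lt_iff_val_lt_val, glue_eq σ τ k h] at hjv; omega
      · rw [Fin.lt_iff_val_lt_val, glue_gt σ τ k h, glue_lt σ τ i hi] at hkv
        have := (σ ⟨i, hi⟩).isLt; omega
    have hj : (j : ℕ) < a := lt_trans (Fin.lt_iff_val_lt_val.mp hjk) hk
    refine hσ ⟨⟨i, hi⟩, ⟨j, hj⟩, ⟨k, hk⟩, hij, hjk, ?_, ?_⟩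
    · have := hjv; rw [Fin.lt_iff_val_lt_val, glue_lt σ τ j hj, glue_lt σ τ k hk] at this
      exact Fin.lt_iff_val_lt_val.mpr (by omega)
    · have := hkv; rw [Fin.lt_iff_val_lt_val, glue_lt σ τ k hk, glue_lt σ τ i hi] at this
      exact Fin.lt_iff_val_lt_val.mpr (by omega)
  · -- i at the 0: impossible
    rw [Fin.lt_iff_val_lt_val, glue_eq σ τ i hi] at hkv; omega
  · -- i after the 0; then j, k after too
    have hj : a < (j : ℕ) := lt_trans hi (Fin.lt_iff_val_lt_val.mp hij)
    have hk : a < (k : ℕ) := lt_trans hj (Fin.lt_iff_val_lt_val.mp hjk)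
    have hin := i.isLt; have hjn := j.isLt; have hkn := k.isLt
    refine hτ ⟨⟨(i : ℕ) - a - 1, by omega⟩, ⟨(j : ℕ) - a - 1, by omega⟩,
      ⟨(k : ℕ) - a - 1, by omega⟩, ?_, ?_, ?_, ?_⟩
    · exact Fin.lt_iff_val_lt_val.mpr (by have := Fin.lt_iff_val_lt_val.mp hij; simp; omega)
    · exact Fin.lt_iff_val_lt_val.mpr (by have := Fin.lt_iff_val_lt_val.mp hjk; simp; omega)
    · have := hjv; rw [Fin.lt_iff_val_lt_val, glue_gt σ τ j hj, glue_gt σ τ k hk] at this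
      exact Fin.lt_iff_val_lt_val.mpr (by omega)
    · have := hkv; rw [Fin.lt_iff_val_lt_val, glue_gt σ τ k hk, glue_gt σ τ i hi] at this
      exact Fin.lt_iff_val_lt_val.mpr (by omega)

lemma glue_symm_zero {a b : ℕ} (σ : Equiv.Perm (Fin a)) (τ : Equiv.Perm (Fin b)) :
    (glue σ τ ⟨a, by omega⟩ : ℕ) = 0 := glue_eq σ τ _ rfl

/-- Transport a permutation along an equality of sizes. -/
def castPerm {m n : ℕ} (h : m = n) (π : Equiv.Perm (Fin m)) : Equiv.Perm (Fin n) :=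
  (finCongr h).permCongr π

lemma castPerm_apply {m n : ℕ} (h : m = n) (π : Equiv.Perm (Fin m)) (p : Fin n) :
    (castPerm h π p : ℕ) = (π ⟨p, by omega⟩ : ℕ) := by
  subst h
  simp [castPerm]

lemma castPerm_avoids {m n : ℕ} (h : m = n) {π : Equiv.Perm (Fin m)}
    (hπ : Avoids312 π) : Avoids312 (castPerm h π) := by
  subst h
  have e : castPerm rfl π = π := by
    apply Equiv.ext; intro p; apply Fin.ext; rw [castPerm_apply]
  rwa [e]

-- Key structural facts about a 312-avoiding permutation, where `a := π.symm 0`.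

lemma before_lt_after {n : ℕ} [NeZero n] {π : Equiv.Perm (Fin n)} (hπ : Avoids312 π)
    {p q : Fin n} (hp : p < π.symm 0) (hq : π.symm 0 < q) : π p < π q := by
  rcases lt_trichotomy (π p) (π q) with h | h | h
  · exact h
  · exact absurd (π.injective h) (by intro e; subst e; exact absurd rfl (ne_of_lt (hp.trans hq)))
  · exfalso
    apply hπ
    refine ⟨p, π.symm 0, q, hp, hq, ?_, ?_⟩
    · rw [Equiv.apply_symm_apply]
      rcases Nat.eq_zero_or_pos ((π q : Fin n) : ℕ) with h0 | h0
      · exfalso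
        have : π q = π (π.symm 0) := by
          rw [Equiv.apply_symm_apply]; exact Fin.ext h0
        exact absurd (π.injective this) (ne_of_gt hq)
      · exact Fin.lt_iff_val_lt_val.mpr (by simpa using h0)
    · exact h

lemma before_le {n : ℕ} [NeZero n] {π : Equiv.Perm (Fin n)} (hπ : Avoids312 π)
    {p : Fin n} (hp : p < π.symm 0) : (π p : ℕ) ≤ ((π.symm 0 : Fin n) : ℕ) := by
  set a := π.symm 0 with ha
  by_contra hcon
  push_neg at hcon
  -- every position after `a` has value greater than `π p`; count.
  have hinj : Set.InjOn π (Finset.Ioi a) := fun x _ y _ h => π.injective h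
  have hmaps : ∀ x ∈ Finset.Ioi a, π x ∈ Finset.Ioi (π p) := by
    intro x hx
    rw [Finset.mem_Ioi] at hx ⊢
    exact before_lt_after hπ hp hx
  have hcard := Finset.card_le_card_of_injOn π hmaps hinj
  rw [Fin.card_Ioi, Fin.card_Ioi] at hcard
  have h1 : (a : ℕ) < n := a.isLt
  have h2 : ((π p : Fin n) : ℕ) < n := (π p).isLt
  omega

lemma le_before {n : ℕ} [NeZero n] {π : Equiv.Perm (Fin n)} (hπ : Avoids312 π)
    {q : Fin n} (hq : π.symm 0 < q) : ((π.symm 0 : Fin n) : ℕ) < (π q : ℕ) := by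
  set a := π.symm 0 with ha
  -- The image of `Iic a` under `π` is exactly `Iic ⟨a, _⟩`.
  have hsub : Finset.image π (Finset.Iic a) ⊆ Finset.Iic (⟨(a : ℕ), a.isLt⟩ : Fin n) := by
    intro v hv
    rw [Finset.mem_image] at hv
    obtain ⟨p, hp, rfl⟩ := hv
    rw [Finset.mem_Iic] at hp ⊢
    rcases lt_or_eq_of_le hp with h | h
    · exact Fin.le_iff_val_le_val.mpr (before_le hπ h)
    · subst h
      show ((π (π.symm 0) : Fin n) : ℕ) ≤ _
      rw [Equiv.apply_symm_apply]
      exact Nat.zero_le _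
  have hcard : (Finset.Iic (⟨(a : ℕ), a.isLt⟩ : Fin n)).card ≤
      (Finset.image π (Finset.Iic a)).card := by
    rw [Finset.card_image_of_injective _ π.injective, Fin.card_Iic]
  have heq := Finset.eq_of_subset_of_card_le hsub hcard
  by_contra hcon
  push_neg at hcon
  have : π q ∈ Finset.Iic (⟨(a : ℕ), a.isLt⟩ : Fin n) :=
    Finset.mem_Iic.mpr (Fin.le_iff_val_le_val.mpr hcon)
  rw [← heq, Finset.mem_image] at this
  obtain ⟨p, hp, hpe⟩ := this
  rw [Finset.mem_Iic] at hp
  have := π.injective hpe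
  rw [this] at hp
  exact absurd hq (not_lt.mpr hp)

lemma castPerm_rfl {n : ℕ} (π : Equiv.Perm (Fin n)) : castPerm rfl π = π := by
  apply Equiv.ext; intro p; apply Fin.ext; rw [castPerm_apply]

/-- Decomposition: a permutation with `0` at position `a`, small values before it and
large values after it, is a glue. -/
lemma glue_decomp {n a : ℕ} (π : Equiv.Perm (Fin n)) (han : a < n)
    (h0 : ∀ p : Fin n, (p : ℕ) = a → (π p : ℕ) = 0)
    (hbefore : ∀ p : Fin n, (p : ℕ) < a → 1 ≤ (π p : ℕ) ∧ (π p : ℕ) ≤ a)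
    (hafter : ∀ q : Fin n, a < (q : ℕ) → a < (π q : ℕ)) :
    ∃ (σ : Equiv.Perm (Fin a)) (τ : Equiv.Perm (Fin (n - 1 - a))),
      π = castPerm (by omega) (glue σ τ) := by
  -- the first block
  obtain ⟨f, hf⟩ : ∃ f : Fin a → Fin a,
      ∀ p : Fin a, (f p : ℕ) = ((π ⟨(p : ℕ), by have := p.isLt; omega⟩ : Fin n) : ℕ) - 1 := by
    refine ⟨fun p => ⟨((π ⟨(p : ℕ), by have := p.isLt; omega⟩ : Fin n) : ℕ) - 1, ?_⟩,
      fun p => rfl⟩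
    have := hbefore ⟨(p : ℕ), by have := p.isLt; omega⟩ p.isLt
    omega
  have hfinj : Function.Injective f := by
    intro x y hxy
    have hb1 := hbefore ⟨(x : ℕ), by have := x.isLt; omega⟩ x.isLt
    have hb2 := hbefore ⟨(y : ℕ), by have := y.isLt; omega⟩ y.isLt
    have hval : ((π ⟨(x : ℕ), by have := x.isLt; omega⟩ : Fin n) : ℕ)
        = ((π ⟨(y : ℕ), by have := y.isLt; omega⟩ : Fin n) : ℕ) := by
      have h1 := hf x; have h2 := hf y
      rw [hxy] at h1
      omega
    have := π.injective (Fin.ext hval)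
    have := congrArg Fin.val this
    simp only at this
    exact Fin.ext this
  obtain ⟨σ, hσ⟩ : ∃ σ : Equiv.Perm (Fin a),
      ∀ p : Fin a, (σ p : ℕ) = ((π ⟨(p : ℕ), by have := p.isLt; omega⟩ : Fin n) : ℕ) - 1 :=
    ⟨Equiv.ofBijective f (Finite.injective_iff_bijective.mp hfinj), fun p => hf p⟩
  -- the second block
  obtain ⟨g, hg⟩ : ∃ g : Fin (n - 1 - a) → Fin (n - 1 - a),
      ∀ q : Fin (n - 1 - a),
        (g q : ℕ) = ((π ⟨(q : ℕ) + a + 1, by have := q.isLt; omega⟩ : Fin n) : ℕ) - a - 1 := by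
    refine ⟨fun q => ⟨((π ⟨(q : ℕ) + a + 1, by have := q.isLt; omega⟩ : Fin n) : ℕ) - a - 1, ?_⟩,
      fun q => rfl⟩
    have h1 := hafter ⟨(q : ℕ) + a + 1, by have := q.isLt; omega⟩ (by simp)
    have h2 := (π ⟨(q : ℕ) + a + 1, by have := q.isLt; omega⟩ : Fin n).isLt
    have := q.isLt
    omega
  have hginj : Function.Injective g := by
    intro x y hxy
    have ha1 := hafter ⟨(x : ℕ) + a + 1, by have := x.isLt; omega⟩ (by simp)
    have ha2 := hafter ⟨(y : ℕ) + a + 1, by have := y.isLt; omega⟩ (by simp)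
    have hval : ((π ⟨(x : ℕ) + a + 1, by have := x.isLt; omega⟩ : Fin n) : ℕ)
        = ((π ⟨(y : ℕ) + a + 1, by have := y.isLt; omega⟩ : Fin n) : ℕ) := by
      have h1 := hg x; have h2 := hg y
      rw [hxy] at h1
      omega
    have := π.injective (Fin.ext hval)
    have := congrArg Fin.val this
    simp only at this
    exact Fin.ext (by omega)
  obtain ⟨τ, hτ⟩ : ∃ τ : Equiv.Perm (Fin (n - 1 - a)),
      ∀ q : Fin (n - 1 - a),
        (τ q : ℕ) = ((π ⟨(q : ℕ) + a + 1, by have := q.isLt; omega⟩ : Fin n) : ℕ) - a - 1 :=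
    ⟨Equiv.ofBijective g (Finite.injective_iff_bijective.mp hginj), fun q => hg q⟩
  refine ⟨σ, τ, ?_⟩
  apply Equiv.ext
  intro p
  apply Fin.ext
  rw [castPerm_apply]
  rcases lt_trichotomy (p : ℕ) a with h | h | h
  · rw [glue_val_lt σ τ (p : ℕ) h]
    have h1 := hσ ⟨(p : ℕ), h⟩
    simp only [Fin.val_mk] at h1 ⊢
    have h2 := hbefore p h
    have he : (⟨(p : ℕ), p.isLt⟩ : Fin n) = p := Fin.ext rfl
    rw [he] at h1
    omega
  · rw [glue_val_eq σ τ (p : ℕ) h]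
    exact h0 p h
  · rw [glue_val_gt σ τ (p : ℕ) h]
    have h1 := hτ ⟨(p : ℕ) - a - 1, by have := p.isLt; omega⟩
    simp only [Fin.val_mk] at h1 ⊢
    have h2 := hafter p h
    have he : (⟨(p : ℕ) - a - 1 + a + 1, by have := p.isLt; omega⟩ : Fin n) = p :=
      Fin.ext (by simp only [Fin.val_mk]; omega)
    rw [he] at h1
    omega

/-- Every 312-avoiding permutation is a glue at `a = π⁻¹ 0`. -/
lemma exists_glue {n : ℕ} [NeZero n] (π : Equiv.Perm (Fin n)) (hπ : Avoids312 π) :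
    ∃ (σ : Equiv.Perm (Fin ((π.symm 0 : Fin n) : ℕ)))
      (τ : Equiv.Perm (Fin (n - 1 - ((π.symm 0 : Fin n) : ℕ)))),
      π = castPerm (by have := (π.symm 0 : Fin n).isLt; omega) (glue σ τ) := by
  apply glue_decomp π (π.symm 0 : Fin n).isLt
  · intro p hp
    have : p = π.symm 0 := Fin.ext hp
    rw [this, Equiv.apply_symm_apply]
    simp
  · intro p hp
    have hlt : p < π.symm 0 := Fin.lt_iff_val_lt_val.mpr hp
    constructor
    · by_contra hc
      have : p = π.symm 0 := by
        apply π.injective; rw [Equiv.apply_symm_apply]; exact Fin.ext (by simp only [Fin.val_zero]; omega)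
      rw [this] at hlt
      exact lt_irrefl _ hlt
    · exact before_le hπ hlt
  · intro q hq
    exact le_before hπ (Fin.lt_iff_val_lt_val.mpr hq)

/-- If `castPerm h (glue σ τ)` avoids 312 then so do `σ` and `τ`. -/
lemma avoids_of_glue {a b n : ℕ} (h : a + 1 + b = n) {σ : Equiv.Perm (Fin a)}
    {τ : Equiv.Perm (Fin b)} (hπ : Avoids312 (castPerm h (glue σ τ))) :
    Avoids312 σ ∧ Avoids312 τ := by
  subst h
  rw [castPerm_rfl] at hπ
  constructor
  · rintro ⟨i, j, k, hij, hjk, hjv, hkv⟩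
    apply hπ
    have hi' : (i : ℕ) < a + 1 + b := by have := i.isLt; omega
    have hj' : (j : ℕ) < a + 1 + b := by have := j.isLt; omega
    have hk' : (k : ℕ) < a + 1 + b := by have := k.isLt; omega
    have vi := glue_val_emb σ τ i (h := hi')
    have vj := glue_val_emb σ τ j (h := hj')
    have vk := glue_val_emb σ τ k (h := hk')
    refine ⟨⟨(i : ℕ), hi'⟩, ⟨(j : ℕ), hj'⟩, ⟨(k : ℕ), hk'⟩, ?_, ?_, ?_, ?_⟩
    · exact Fin.mk_lt_mk.mpr (Fin.lt_iff_val_lt_val.mp hij)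
    · exact Fin.mk_lt_mk.mpr (Fin.lt_iff_val_lt_val.mp hjk)
    · apply Fin.lt_iff_val_lt_val.mpr
      rw [vj, vk]
      have := Fin.lt_iff_val_lt_val.mp hjv; omega
    · apply Fin.lt_iff_val_lt_val.mpr
      rw [vk, vi]
      have := Fin.lt_iff_val_lt_val.mp hkv; omega
  · rintro ⟨i, j, k, hij, hjk, hjv, hkv⟩
    apply hπ
    have hi' : (i : ℕ) + a + 1 < a + 1 + b := by have := i.isLt; omega
    have hj' : (j : ℕ) + a + 1 < a + 1 + b := by have := j.isLt; omega
    have hk' : (k : ℕ) + a + 1 < a + 1 + b := by have := k.isLt; omega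
    have vi := glue_val_shift σ τ i (h := hi')
    have vj := glue_val_shift σ τ j (h := hj')
    have vk := glue_val_shift σ τ k (h := hk')
    refine ⟨⟨(i : ℕ) + a + 1, hi'⟩, ⟨(j : ℕ) + a + 1, hj'⟩, ⟨(k : ℕ) + a + 1, hk'⟩,
      ?_, ?_, ?_, ?_⟩
    · exact Fin.mk_lt_mk.mpr (by have := Fin.lt_iff_val_lt_val.mp hij; omega)
    · exact Fin.mk_lt_mk.mpr (by have := Fin.lt_iff_val_lt_val.mp hjk; omega)
    · apply Fin.lt_iff_val_lt_val.mpr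
      rw [vj, vk]
      have := Fin.lt_iff_val_lt_val.mp hjv; omega
    · apply Fin.lt_iff_val_lt_val.mpr
      rw [vk, vi]
      have := Fin.lt_iff_val_lt_val.mp hkv; omega

lemma cast_glue_emb {a b n : ℕ} (h : a + 1 + b = n) (σ : Equiv.Perm (Fin a))
    (τ : Equiv.Perm (Fin b)) (j : Fin a) {hn : (j : ℕ) < n} :
    ((castPerm h (glue σ τ)) ⟨(j : ℕ), hn⟩ : ℕ) = (σ j : ℕ) + 1 := by
  rw [castPerm_apply]
  exact glue_val_emb σ τ j

lemma cast_glue_zero {a b n : ℕ} (h : a + 1 + b = n) (σ : Equiv.Perm (Fin a))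
    (τ : Equiv.Perm (Fin b)) {hn : a < n} :
    ((castPerm h (glue σ τ)) ⟨a, hn⟩ : ℕ) = 0 := by
  rw [castPerm_apply]
  exact glue_val_eq σ τ a rfl

lemma cast_glue_shift {a b n : ℕ} (h : a + 1 + b = n) (σ : Equiv.Perm (Fin a))
    (τ : Equiv.Perm (Fin b)) (j : Fin b) {hn : (j : ℕ) + a + 1 < n} :
    ((castPerm h (glue σ τ)) ⟨(j : ℕ) + a + 1, hn⟩ : ℕ) = (τ j : ℕ) + a + 1 := by
  rw [castPerm_apply]
  exact glue_val_shift σ τ j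

/-- The avoiding permutations of `S_m` are counted by the Catalan numbers. -/
lemma card_avoid : ∀ m : ℕ, Nat.card {π : Equiv.Perm (Fin m) // Avoids312 π} = catalan m := by
  intro m
  induction m using Nat.strong_induction_on with
  | _ m IH =>
    match m with
    | 0 =>
      haveI : Unique {π : Equiv.Perm (Fin 0) // Avoids312 π} :=
        { default := ⟨1, fun ⟨i, _⟩ => i.elim0⟩
          uniq := fun ⟨π, _⟩ => Subtype.ext (Equiv.ext fun x => x.elim0) }
      rw [Nat.card_unique, catalan_zero]
    | k + 1 =>
      classical
      -- the bijection with Σ i, avoiders of S_i × avoiders of S_(k-i)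
      have hcard : Nat.card (Σ i : Fin (k + 1),
            {σ : Equiv.Perm (Fin (i : ℕ)) // Avoids312 σ} ×
            {τ : Equiv.Perm (Fin (k - (i : ℕ))) // Avoids312 τ})
          = Nat.card {π : Equiv.Perm (Fin (k + 1)) // Avoids312 π} := by
        have harr : ∀ i : Fin (k + 1), (i : ℕ) + 1 + (k - (i : ℕ)) = k + 1 := fun i => by
          have := i.isLt; omega
        apply Nat.card_eq_of_bijective
          (fun x => ⟨castPerm (harr x.1) (glue x.2.1.1 x.2.2.1),
            castPerm_avoids _ (glue_avoids x.2.1.2 x.2.2.2)⟩)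
        constructor
        · rintro ⟨i1, ⟨σ1, hσ1⟩, ⟨τ1, hτ1⟩⟩ ⟨i2, ⟨σ2, hσ2⟩, ⟨τ2, hτ2⟩⟩ hxy
          simp only [Subtype.mk.injEq] at hxy
          have hi : i1 = i2 := by
            have e1 := cast_glue_zero (harr i1) σ1 τ1 (hn := i1.isLt)
            rw [hxy] at e1
            rcases lt_trichotomy ((i1 : ℕ)) ((i2 : ℕ)) with hlt | heq | hgt
            · exfalso
              obtain ⟨j, hj⟩ : ∃ j : Fin (i2 : ℕ), (j : ℕ) = (i1 : ℕ) := ⟨⟨i1, hlt⟩, rfl⟩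
              have e2 := cast_glue_emb (harr i2) σ2 τ2 j (hn := by have := j.isLt; omega)
              have : (⟨(j : ℕ), by have := j.isLt; omega⟩ : Fin (k + 1))
                  = ⟨(i1 : ℕ), i1.isLt⟩ := Fin.ext hj
              rw [this] at e2
              omega
            · exact Fin.ext heq
            · exfalso
              obtain ⟨j, hj⟩ : ∃ j : Fin (k - (i2 : ℕ)), (j : ℕ) + (i2 : ℕ) + 1 = (i1 : ℕ) :=
                ⟨⟨(i1 : ℕ) - (i2 : ℕ) - 1, by have := i1.isLt; omega⟩, by
                  show (i1 : ℕ) - (i2 : ℕ) - 1 + (i2 : ℕ) + 1 = (i1 : ℕ)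
                  have := i1.isLt; omega⟩
              have e2 := cast_glue_shift (harr i2) σ2 τ2 j (hn := by have := i1.isLt; omega)
              have : (⟨(j : ℕ) + (i2 : ℕ) + 1, by have := i1.isLt; omega⟩ : Fin (k + 1))
                  = ⟨(i1 : ℕ), i1.isLt⟩ := Fin.ext hj
              rw [this] at e2
              omega
          subst hi
          have hσ : σ1 = σ2 := by
            apply Equiv.ext
            intro p
            apply Fin.ext
            have e1 := cast_glue_emb (harr i1) σ1 τ1 p (hn := by have := p.isLt; have := i1.isLt; omega)
            have e2 := cast_glue_emb (harr i1) σ2 τ2 p (hn := by have := p.isLt; have := i1.isLt; omega)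
            rw [hxy] at e1
            omega
          have hτ : τ1 = τ2 := by
            apply Equiv.ext
            intro q
            apply Fin.ext
            have e1 := cast_glue_shift (harr i1) σ1 τ1 q (hn := by have := q.isLt; omega)
            have e2 := cast_glue_shift (harr i1) σ2 τ2 q (hn := by have := q.isLt; omega)
            rw [hxy] at e1
            omega
          subst hσ
          subst hτ
          rfl
        · rintro ⟨π, hπ⟩
          haveI : NeZero (k + 1) := ⟨Nat.succ_ne_zero k⟩
          obtain ⟨σ, τ, hdec⟩ := exists_glue π hπ
          refine ⟨⟨π.symm 0, ⟨σ, ?_⟩, ⟨τ, ?_⟩⟩, ?_⟩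
          · exact (avoids_of_glue _ (hdec ▸ hπ)).1
          · exact (avoids_of_glue _ (hdec ▸ hπ)).2
          · exact Subtype.ext hdec.symm
      rw [← hcard]
      rw [Nat.card_eq_fintype_card, Fintype.card_sigma]
      have : ∀ i : Fin (k + 1),
          Fintype.card ({σ : Equiv.Perm (Fin (i : ℕ)) // Avoids312 σ} ×
            {τ : Equiv.Perm (Fin (k - (i : ℕ))) // Avoids312 τ})
          = catalan (i : ℕ) * catalan (k - (i : ℕ)) := by
        intro i
        rw [Fintype.card_prod, ← Nat.card_eq_fintype_card, ← Nat.card_eq_fintype_card,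
          IH (i : ℕ) (by have := i.isLt; omega), IH (k - (i : ℕ)) (by omega)]
      rw [Finset.sum_congr rfl fun i _ => this i, catalan_succ]

/-- A permutation with `0` in the last position is indecomposable. -/
lemma indec_of_last {n : ℕ} (π : Equiv.Perm (Fin n))
    (hl : ∀ p : Fin n, (p : ℕ) + 1 = n → (π p : ℕ) = 0) : Indecomposable π := by
  rintro ⟨j, hj1, hj2⟩
  have hk := hj2 j ⟨n - 1, by omega⟩ le_rfl (Fin.lt_iff_val_lt_val.mpr (by
    simp only [Fin.val_mk]; omega))
  have h0 := hl ⟨n - 1, by omega⟩ (by simp only [Fin.val_mk]; omega)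
  rw [Fin.lt_iff_val_lt_val, h0] at hk
  omega

/-- An avoiding indecomposable permutation has `0` in the last position. -/
lemma zero_last {n : ℕ} [NeZero n] {π : Equiv.Perm (Fin n)} (hπ : Avoids312 π)
    (hind : Indecomposable π) : ((π.symm 0 : Fin n) : ℕ) = n - 1 := by
  by_contra hcon
  have han : ((π.symm 0 : Fin n) : ℕ) < n := (π.symm 0).isLt
  apply hind
  refine ⟨π.symm 0, by omega, ?_⟩
  intro i k hi hk
  apply Fin.lt_iff_val_lt_val.mpr
  have hub : (π i : ℕ) ≤ ((π.symm 0 : Fin n) : ℕ) := by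
    rcases lt_or_eq_of_le hi with h | h
    · exact before_le hπ h
    · subst h
      rw [Equiv.apply_symm_apply]
      simp
  have hlb := le_before hπ hk
  omega

end Av312Aux

open Av312Aux

/-- The number of 312-avoiding indecomposable permutations in `S_n` is the
Catalan number `C_{n-1}`. -/
theorem number_of_312_avoiding_indecomposable (n : ℕ) (hn : 1 ≤ n) :
    Nat.card {π : Equiv.Perm (Fin n) // Avoids312 π ∧ Indecomposable π} = catalan (n - 1) := by
  obtain ⟨m, rfl⟩ : ∃ m, n = m + 1 := ⟨n - 1, by omega⟩
  haveI : NeZero (m + 1) := ⟨Nat.succ_ne_zero m⟩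
  have harr : m + 1 + (m - m) = m + 1 := by omega
  have hι : Avoids312 (1 : Equiv.Perm (Fin (m - m))) := fun ⟨i, _, _⟩ => absurd i.isLt (by omega)
  have hmain : Nat.card {σ : Equiv.Perm (Fin m) // Avoids312 σ}
      = Nat.card {π : Equiv.Perm (Fin (m + 1)) // Avoids312 π ∧ Indecomposable π} := by
    apply Nat.card_eq_of_bijective (fun x =>
      ⟨castPerm harr (glue x.1 (1 : Equiv.Perm (Fin (m - m)))),
        castPerm_avoids _ (glue_avoids x.2 hι),
        indec_of_last _ (fun p hp => by
          have : p = (⟨m, by omega⟩ : Fin (m + 1)) := Fin.ext (by simp only [Fin.val_mk]; omega)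
          rw [this]
          exact cast_glue_zero harr x.1 (1 : Equiv.Perm (Fin (m - m))))⟩)
    constructor
    · intro x y hxy
      have hxy2 : castPerm harr (glue x.1 (1 : Equiv.Perm (Fin (m - m))))
          = castPerm harr (glue y.1 (1 : Equiv.Perm (Fin (m - m)))) :=
        congrArg Subtype.val hxy
      apply Subtype.ext
      apply Equiv.ext
      intro p
      apply Fin.ext
      have e1 := cast_glue_emb harr x.1 (1 : Equiv.Perm (Fin (m - m))) p
        (hn := by have := p.isLt; omega)
      have e2 := cast_glue_emb harr y.1 (1 : Equiv.Perm (Fin (m - m))) p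
        (hn := by have := p.isLt; omega)
      rw [hxy2] at e1
      omega
    · rintro ⟨π, hπ, hind⟩
      have hz := zero_last hπ hind
      have hzm : ((π.symm 0 : Fin (m + 1)) : ℕ) = m := by simpa using hz
      obtain ⟨σ, τ, hdec⟩ : ∃ (σ : Equiv.Perm (Fin m)) (τ : Equiv.Perm (Fin (m + 1 - 1 - m))),
          π = castPerm (by omega) (glue σ τ) := by
        apply glue_decomp π (by omega)
        · intro p hp
          have : p = π.symm 0 := Fin.ext (by omega)
          rw [this, Equiv.apply_symm_apply]
          simp
        · intro p hp
          have hplt : p < π.symm 0 := Fin.lt_iff_val_lt_val.mpr (by omega)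
          constructor
          · by_contra hc
            have : p = π.symm 0 := by
              apply π.injective; rw [Equiv.apply_symm_apply]; exact Fin.ext (by simp only [Fin.val_zero]; omega)
            rw [this] at hplt
            exact lt_irrefl _ hplt
          · have := before_le hπ hplt
            omega
        · intro q hq
          have := q.isLt
          omega
      have hτ : τ = (1 : Equiv.Perm (Fin (m + 1 - 1 - m))) :=
        Equiv.ext fun x => absurd x.isLt (by omega)
      subst hτ
      refine ⟨⟨σ, ?_⟩, ?_⟩
      · exact (avoids_of_glue _ (hdec ▸ hπ)).1
      · apply Subtype.ext
        exact hdec.symm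
  rw [← hmain, card_avoid]
  simp
end

section
/- Let (α_i)_{i≥1} be a sequence in a commutative ring, let f(t) = Σ_{i≥1} α_i t^i as a formal power series, and for d ≥ k ≥ 1 let γ_{d,k} = Σ_{𝒫} α_{a_1}·α_{a_2}⋯α_{a_k}, the sum over all cyclic compositions 𝒫 of d into k parts with part sizes a_1,…,a_k. Then Σ_{d≥k} γ_{d,k} t^d = t·f′(t)·f(t)^{k−1} as formal power series. -/
/-- A cyclic composition of `d` into `k` parts is a partition of the vertex set of the
labeled cycle `ℤ/d` into blocks inducing paths; equivalently it is obtained by deleting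
a nonempty set `S` of the `d` edges of the cycle (we identify the edge `{s, s+1}` with
its left endpoint `s`, so `S` is a `Finset (ZMod d)`).  The block that starts right
after the deleted edge `s` has size `cycGap d S s`, the least `m ≥ 1` with `s + m ∈ S`. -/
noncomputable def cycGap (d : ℕ) (S : Finset (ZMod d)) (s : ZMod d) : ℕ :=
  sInf {m : ℕ | 0 < m ∧ s + (m : ZMod d) ∈ S}

/-- `γ_{d,k} = Σ_𝒫 α_{a_1} ⋯ α_{a_k}`, summed over all cyclic compositions `𝒫` of `d`
into `k` parts (encoded as `k`-element sets of deleted edges), where `a_1, …, a_k` are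
the part sizes.  (For `d = 0` there is no cycle and the sum is empty.) -/
noncomputable def cycCompSum {R : Type*} [CommRing R] (α : ℕ → R) (d k : ℕ) : R :=
  if h : d = 0 then 0 else
    haveI : NeZero d := ⟨h⟩
    ∑ S ∈ (Finset.univ : Finset (ZMod d)).powersetCard k, ∏ s ∈ S, α (cycGap d S s)

open Finset

lemma sInf_eq_of {A : Set ℕ} {m : ℕ} (hm : m ∈ A) (h : ∀ x ∈ A, m ≤ x) : sInf A = m :=
  le_antisymm (Nat.sInf_le hm) (h _ (Nat.sInf_mem ⟨m, hm⟩))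

/-- natural-number version of the cyclic gap -/
noncomputable def ngap (d : ℕ) (T : Finset ℕ) (t : ℕ) : ℕ :=
  sInf {m : ℕ | 0 < m ∧ (t + m) % d ∈ T}

lemma ngap_eq {d k : ℕ} (q : Fin (k + 1) → ℕ) (hq : StrictMono q)
    (hlt : ∀ i, q i < d) (i : Fin (k + 1)) :
    ngap d (image q univ) (q i) =
      if h : (i : ℕ) + 1 < k + 1 then q ⟨(i : ℕ) + 1, h⟩ - q i else d + q 0 - q i := by
  have hmemT : ∀ x : ℕ, x ∈ image q univ ↔ ∃ i', q i' = x := by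
    intro x; simp [mem_image]
  split_ifs with h
  · apply sInf_eq_of
    · constructor
      · have := hq (show i < ⟨(i : ℕ) + 1, h⟩ by simp [Fin.lt_def]); omega
      · have h1 : q i + (q ⟨(i : ℕ) + 1, h⟩ - q i) = q ⟨(i : ℕ) + 1, h⟩ := by
          have := hq (show i < ⟨(i : ℕ) + 1, h⟩ by simp [Fin.lt_def]); omega
        rw [h1, Nat.mod_eq_of_lt (hlt _), hmemT]
        exact ⟨_, rfl⟩
    · rintro x ⟨hx0, hxT⟩
      by_contra hc
      push_neg at hc
      have hlt1 : q i + x < q ⟨(i : ℕ) + 1, h⟩ := by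
        have := hq (show i < ⟨(i : ℕ) + 1, h⟩ by simp [Fin.lt_def]); omega
      have hmod : (q i + x) % d = q i + x := Nat.mod_eq_of_lt (lt_trans hlt1 (hlt _))
      rw [hmod, hmemT] at hxT
      obtain ⟨i', hi'⟩ := hxT
      have h1 : i < i' := hq.lt_iff_lt.mp (by omega)
      have h2 : i' < (⟨(i : ℕ) + 1, h⟩ : Fin (k+1)) := hq.lt_iff_lt.mp (by omega)
      rw [Fin.lt_def] at h1 h2
      simp at h2; omega
  · -- i is the last index
    have hmax : ∀ i', q i' ≤ q i := by
      intro i'; exact hq.monotone (by rw [Fin.le_def]; omega)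
    have hd : 0 < d := lt_of_le_of_lt (Nat.zero_le _) (hlt i)
    apply sInf_eq_of
    · constructor
      · have := hlt i; omega
      · have h1 : q i + (d + q 0 - q i) = d + q 0 := by have := hlt i; omega
        rw [h1, Nat.add_mod_left, Nat.mod_eq_of_lt (hlt _), hmemT]
        exact ⟨_, rfl⟩
    · rintro x ⟨hx0, hxT⟩
      by_contra hc
      push_neg at hc
      rcases lt_or_ge (q i + x) d with hcase | hcase
      · rw [Nat.mod_eq_of_lt hcase, hmemT] at hxT
        obtain ⟨i', hi'⟩ := hxT
        have := hmax i'; have := hlt i; omega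
      · have hmod : (q i + x) % d = q i + x - d := by
          rw [Nat.mod_eq_sub_mod hcase, Nat.mod_eq_of_lt (by have := hlt i; have := hmax 0; omega)]
        rw [hmod, hmemT] at hxT
        obtain ⟨i', hi'⟩ := hxT
        have h1 : q 0 ≤ q i' := hq.monotone (Fin.zero_le i')
        have := hlt i; omega

section transfer

lemma mem_cast_image {d : ℕ} [NeZero d] {T : Finset ℕ} (hT : ∀ t ∈ T, t < d) {y : ℕ}
    (hy : y < d) : (y : ZMod d) ∈ T.image (Nat.cast : ℕ → ZMod d) ↔ y ∈ T := by
  constructor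
  · intro h
    obtain ⟨u, hu, huy⟩ := mem_image.mp h
    have : u = y := by
      have h1 := congrArg ZMod.val huy
      rwa [ZMod.val_cast_of_lt (hT u hu), ZMod.val_cast_of_lt hy] at h1
    rwa [this] at hu
  · intro h
    exact mem_image_of_mem _ h

lemma cycGap_cast {d : ℕ} [NeZero d] {T : Finset ℕ} (hT : ∀ t ∈ T, t < d) {t : ℕ}
    (ht : t < d) : cycGap d (T.image (Nat.cast : ℕ → ZMod d)) (t : ZMod d) = ngap d T t := by
  have hd : 0 < d := Nat.pos_of_ne_zero (NeZero.ne d)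
  unfold cycGap ngap
  congr 1
  ext m
  have h1 : ((t : ZMod d) + (m : ZMod d)) = (((t + m) % d : ℕ) : ZMod d) := by
    rw [ZMod.natCast_mod, Nat.cast_add]
  simp only [Set.mem_setOf_eq, h1, mem_cast_image hT (Nat.mod_lt _ hd)]

lemma cast_injOn {d : ℕ} [NeZero d] (T : Finset ℕ) (hT : ∀ t ∈ T, t < d) :
    ∀ x ∈ T, ∀ y ∈ T, (x : ZMod d) = (y : ZMod d) → x = y := by
  intro x hx y hy hxy
  have h1 := congrArg ZMod.val hxy
  rwa [ZMod.val_cast_of_lt (hT x hx), ZMod.val_cast_of_lt (hT y hy)] at h1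

lemma cycCompSum_eq_ngap {R : Type*} [CommRing R] (α : ℕ → R) {d : ℕ} (k : ℕ) (hd : d ≠ 0) :
    cycCompSum α d k =
      ∑ T ∈ (range d).powersetCard k, ∏ t ∈ T, α (ngap d T t) := by
  haveI : NeZero d := ⟨hd⟩
  rw [cycCompSum, dif_neg hd]
  refine (Finset.sum_bij' (fun T _ => T.image (Nat.cast : ℕ → ZMod d))
    (fun S _ => S.image ZMod.val) ?_ ?_ ?_ ?_ ?_).symm
  · intro T hT
    rw [mem_powersetCard] at hT ⊢
    have hTd : ∀ t ∈ T, t < d := fun t ht => mem_range.mp (hT.1 ht)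
    exact ⟨subset_univ _, by rw [Finset.card_image_of_injOn (cast_injOn T hTd), hT.2]⟩
  · intro S hS
    rw [mem_powersetCard] at hS ⊢
    constructor
    · intro x hx
      obtain ⟨u, _, rfl⟩ := mem_image.mp hx
      exact mem_range.mpr (ZMod.val_lt u)
    · rw [Finset.card_image_of_injective _ (ZMod.val_injective d), hS.2]
  · intro T hT
    rw [mem_powersetCard] at hT
    have hTd : ∀ t ∈ T, t < d := fun t ht => mem_range.mp (hT.1 ht)
    rw [Finset.image_image]
    nth_rewrite 2 [show T = T.image id from (Finset.image_id).symm]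
    apply Finset.image_congr
    intro x hx
    simp only [Function.comp_apply, id_eq]
    exact ZMod.val_cast_of_lt (hTd x hx)
  · intro S _
    rw [Finset.image_image]
    have h2 : ((Nat.cast : ℕ → ZMod d) ∘ ZMod.val) = id := by
      funext x; exact ZMod.natCast_rightInverse x
    rw [h2, Finset.image_id]
  · intro T hT
    rw [mem_powersetCard] at hT
    have hTd : ∀ t ∈ T, t < d := fun t ht => mem_range.mp (hT.1 ht)
    rw [Finset.prod_image (cast_injOn T hTd)]
    exact Finset.prod_congr rfl fun t ht => by rw [cycGap_cast hTd (hTd t ht)]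

end transfer

section comps
variable {R : Type*} [CommRing R]

def comps (d k : ℕ) : Finset (Fin k → ℕ) :=
  (Fintype.piFinset fun _ => range (d+1)).filter fun c => (∀ i, 1 ≤ c i) ∧ ∑ i, c i = d

lemma mem_comps {d k : ℕ} {c : Fin k → ℕ} :
    c ∈ comps d k ↔ (∀ i, 1 ≤ c i) ∧ ∑ i, c i = d := by
  rw [comps, mem_filter, Fintype.mem_piFinset]
  constructor
  · rintro ⟨-, h⟩; exact h
  · rintro ⟨h1, h2⟩
    refine ⟨fun i => mem_range.mpr ?_, h1, h2⟩
    have := Finset.single_le_sum (f := c) (fun i _ => Nat.zero_le _) (mem_univ i)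
    omega

noncomputable def Wgt (α : ℕ → R) (d k : ℕ) : R :=
  ∑ c ∈ comps d (k+1), (c 0 : R) * ∏ i, α (c i)

lemma Wgt_succ (α : ℕ → R) (d k : ℕ) :
    Wgt α d (k+1) = ∑ j ∈ range d, Wgt α j k * α (d - j) := by
  unfold Wgt
  simp_rw [Finset.sum_mul]
  rw [Finset.sum_sigma']
  refine Finset.sum_bij' (fun c _ => ⟨d - c (Fin.last (k+1)), Fin.init c⟩)
    (fun p _ => Fin.snoc p.2 (d - p.1)) ?_ ?_ ?_ ?_ ?_
  · intro c hc
    rw [mem_comps] at hc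
    obtain ⟨hpos, hsum⟩ := hc
    have hle : c (Fin.last (k+1)) ≤ d := by
      have := Finset.single_le_sum (f := c) (fun i _ => Nat.zero_le _)
        (mem_univ (Fin.last (k+1))); omega
    rw [mem_sigma, mem_range, mem_comps]
    dsimp only
    refine ⟨by have := hpos (Fin.last (k+1)); omega, fun i => hpos i.castSucc, ?_⟩
    have h2 : ∑ i, c i = (∑ i : Fin (k+1), Fin.init c i) + c (Fin.last (k+1)) := by
      rw [Fin.sum_univ_castSucc]; rfl
    omega
  · intro p hp
    rw [mem_sigma, mem_range, mem_comps] at hp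
    obtain ⟨hj, hpos, hsum⟩ := hp
    rw [mem_comps]
    constructor
    · intro i
      refine Fin.lastCases ?_ ?_ i
      · rw [Fin.snoc_last]; omega
      · intro i'; rw [Fin.snoc_castSucc]; exact hpos i'
    · rw [Fin.sum_univ_castSucc]
      simp only [Fin.snoc_castSucc, Fin.snoc_last, hsum]
      have hle : p.1 ≤ d := by
        have := Finset.single_le_sum (f := p.2) (fun i _ => Nat.zero_le _)
          (mem_univ 0); omega
      omega
  · intro c hc
    rw [mem_comps] at hc
    have hle : c (Fin.last (k+1)) ≤ d := by
      have := Finset.single_le_sum (f := c) (fun i _ => Nat.zero_le _)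
        (mem_univ (Fin.last (k+1))); omega
    dsimp only
    rw [Nat.sub_sub_self hle, Fin.snoc_init_self]
  · intro p hp
    rw [mem_sigma, mem_range] at hp
    rw [Fin.snoc_last, Fin.init_snoc, Nat.sub_sub_self (le_of_lt hp.1)]
  · intro c hc
    rw [mem_comps] at hc
    have hle : c (Fin.last (k+1)) ≤ d := by
      have := Finset.single_le_sum (f := c) (fun i _ => Nat.zero_le _)
        (mem_univ (Fin.last (k+1))); omega
    dsimp only
    rw [Nat.sub_sub_self hle]
    have h1 : Fin.init c 0 = c 0 := rfl
    have h2 : ∏ i : Fin (k+2), α (c i) = (∏ i : Fin (k+1), α (Fin.init c i)) * α (c (Fin.last (k+1))) := by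
      rw [Fin.prod_univ_castSucc]; rfl
    rw [h1, h2]; ring

open PowerSeries in
lemma Wgt_genfun (α : ℕ → R) (f : R⟦X⟧) (hf : f = mk fun i => if i = 0 then 0 else α i)
    (k : ℕ) : (mk fun d => Wgt α d k) = X * (derivative R f) * f ^ k := by
  induction k with
  | zero =>
    ext d
    rw [coeff_mk, pow_zero, mul_one]
    cases d with
    | zero =>
      rw [coeff_zero_X_mul]
      apply Finset.sum_eq_zero
      intro c hc
      rw [mem_comps] at hc
      exfalso
      have h1 := hc.1 0
      have h3 := hc.2
      simp [Fin.sum_univ_succ] at h3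
      rw [h3] at h1
      exact Nat.not_succ_le_zero 0 h1
    | succ n =>
      rw [coeff_succ_X_mul, coeff_derivative, hf, coeff_mk, if_neg (Nat.succ_ne_zero n)]
      have hcs : comps (n+1) 1 = {fun _ => n + 1} := by
        ext c
        rw [mem_comps, mem_singleton]
        constructor
        · rintro ⟨h1, h2⟩
          rw [Fin.sum_univ_one] at h2
          funext i
          rw [Subsingleton.elim i 0, h2]
        · rintro rfl
          exact ⟨fun _ => Nat.succ_le_succ (Nat.zero_le n), by rw [Fin.sum_univ_one]⟩
      rw [Wgt, hcs, Finset.sum_singleton, Fin.prod_univ_one]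
      push_cast
      ring
  | succ k ih =>
    have hstep : (mk fun d => Wgt α d (k+1)) = (mk fun d => Wgt α d k) * f := by
      ext d
      rw [coeff_mk, coeff_mul, Finset.Nat.sum_antidiagonal_eq_sum_range_succ_mk,
        Finset.sum_range_succ, hf]
      simp only [coeff_mk]
      rw [Nat.sub_self, if_pos rfl, mul_zero, add_zero, Wgt_succ]
      apply Finset.sum_congr rfl
      intro j hj
      rw [mem_range] at hj
      rw [if_neg (by omega)]
    rw [hstep, ih, pow_succ]
    ring

end comps

section mainbij
variable {R : Type*} [CommRing R]

lemma fin_zero_sub_one {k : ℕ} : (0 : Fin (k+1)) - 1 = Fin.last k := by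
  apply Fin.ext
  rw [Fin.sub_def]
  simp only [Fin.val_zero, Fin.val_last, Nat.add_zero]
  cases k with
  | zero => rfl
  | succ k =>
    have h1 : (1 : Fin (k+2)).val = 1 := rfl
    rw [h1, Nat.mod_eq_of_lt (by omega)]
    omega

lemma fin_succ_sub_one {k : ℕ} (m : ℕ) (h : m + 1 < k + 1) :
    (⟨m+1, h⟩ : Fin (k+1)) - 1 = ⟨m, by omega⟩ := by
  apply Fin.ext
  rw [Fin.sub_def]
  have h1 : (1 : Fin (k+1)).val = 1 := by
    have : (1:ℕ) < k + 1 := by omega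
    simp [Fin.val_one', Nat.mod_eq_of_lt this]
  rw [h1]
  show (k + 1 - 1 + (m+1)) % (k+1) = m
  have : k + 1 - 1 + (m + 1) = (k + 1) + m := by omega
  rw [this, Nat.add_mod_left, Nat.mod_eq_of_lt (by omega)]

/-- partial-sum reconstruction of the deleted-edge positions -/
def qfun (k : ℕ) (c : Fin (k+1) → ℕ) (j : ℕ) (i : Fin (k+1)) : ℕ :=
  j + ∑ i' ∈ range i.val, c ⟨(i' + 1) % (k + 1), Nat.mod_lt _ (Nat.succ_pos k)⟩

lemma qfun_zero (k : ℕ) (c : Fin (k+1) → ℕ) (j : ℕ) : qfun k c j 0 = j := by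
  simp [qfun]

lemma qfun_succ (k : ℕ) (c : Fin (k+1) → ℕ) (j : ℕ) (m : ℕ) (h : m + 1 < k + 1) :
    qfun k c j ⟨m+1, h⟩ = qfun k c j ⟨m, by omega⟩ + c ⟨m+1, h⟩ := by
  unfold qfun
  rw [sum_range_succ, ← add_assoc]
  congr 2
  apply Fin.ext
  show (m + 1) % (k+1) = m + 1
  exact Nat.mod_eq_of_lt h

lemma qfun_mono {k : ℕ} {c : Fin (k+1) → ℕ} (hpos : ∀ i, 1 ≤ c i) (j : ℕ) :
    StrictMono (qfun k c j) := by
  rw [Fin.strictMono_iff_lt_succ]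
  intro i
  have h : (i : ℕ) + 1 < k + 1 := by omega
  have h1 : i.succ = (⟨(i:ℕ)+1, h⟩ : Fin (k+1)) := rfl
  have h2 : i.castSucc = (⟨(i:ℕ), by omega⟩ : Fin (k+1)) := rfl
  rw [h1, h2, qfun_succ]
  have := hpos ⟨(i:ℕ)+1, h⟩
  omega

lemma qfun_sum {k d : ℕ} {c : Fin (k+1) → ℕ} (hsum : ∑ i, c i = d) :
    c 0 + ∑ i' ∈ range k, c ⟨(i' + 1) % (k + 1), Nat.mod_lt _ (Nat.succ_pos k)⟩ = d := by
  rw [← hsum, Fin.sum_univ_succ]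
  congr 1
  rw [← Fin.sum_univ_eq_sum_range (fun i' => c ⟨(i' + 1) % (k + 1), Nat.mod_lt _ (Nat.succ_pos k)⟩) k]
  apply Finset.sum_congr rfl
  intro i _
  congr 1
  apply Fin.ext
  show ((i : ℕ) + 1) % (k+1) = (i : ℕ) + 1
  exact Nat.mod_eq_of_lt (by omega)

lemma qfun_last {k d : ℕ} {c : Fin (k+1) → ℕ} (hsum : ∑ i, c i = d) (j : ℕ) :
    c 0 ≤ d ∧ qfun k c j (Fin.last k) = j + (d - c 0) := by
  have h1 := qfun_sum (k := k) hsum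
  unfold qfun
  constructor
  · omega
  · show j + ∑ i' ∈ range k, _ = j + (d - c 0)
    omega

lemma qfun_lt {k d : ℕ} {c : Fin (k+1) → ℕ} (hpos : ∀ i, 1 ≤ c i) (hsum : ∑ i, c i = d)
    {j : ℕ} (hj : j < c 0) (i : Fin (k+1)) : qfun k c j i < d := by
  have h1 := (qfun_last (k := k) hsum j).1
  have h2 := (qfun_last (k := k) hsum j).2
  have h3 : qfun k c j i ≤ qfun k c j (Fin.last k) :=
    (qfun_mono hpos j).monotone (Fin.le_last i)
  omega

lemma telescope {k : ℕ} (v : Fin (k+1) → ℕ) (hmono : Monotone v) :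
    ∑ i : Fin k, (v i.succ - v i.castSucc) = v (Fin.last k) - v 0 := by
  induction k with
  | zero => simp
  | succ k ih =>
    rw [Fin.sum_univ_castSucc]
    have h1 : ∀ i : Fin k, (i.castSucc).succ = (i.succ).castSucc := fun i =>
      (Fin.succ_castSucc i).symm ▸ rfl
    have h2 : ∑ i : Fin k, (v i.castSucc.succ - v i.castSucc.castSucc)
        = (v ∘ Fin.castSucc) (Fin.last k) - (v ∘ Fin.castSucc) 0 := by
      have := ih (v ∘ Fin.castSucc) (hmono.comp (Fin.strictMono_castSucc).monotone)
      rw [← this]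
      apply Finset.sum_congr rfl
      intro i _
      rw [Function.comp_apply, Function.comp_apply, Fin.succ_castSucc]
    rw [h2]
    have h3 : (v ∘ Fin.castSucc) 0 = v 0 := by
      simp [Function.comp_apply]
    have h4 : (Fin.last k).succ = Fin.last (k+1) := rfl
    rw [h3, h4]
    have h5 : v 0 ≤ v ((Fin.last k).castSucc) := hmono (Fin.zero_le _)
    have h6 : v ((Fin.last k).castSucc) ≤ v (Fin.last (k+1)) := hmono (Fin.le_last _)
    simp only [Function.comp_apply]
    omega

lemma ngap_orderEmb {d k : ℕ} (T : Finset ℕ) (hsub : T ⊆ range d) (hcard : T.card = k+1)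
    (i : Fin (k+1)) :
    ngap d T (T.orderEmbOfFin hcard i) =
      if h : (i : ℕ) + 1 < k + 1 then
        T.orderEmbOfFin hcard ⟨(i:ℕ)+1, h⟩ - T.orderEmbOfFin hcard i
      else d + T.orderEmbOfFin hcard 0 - T.orderEmbOfFin hcard i := by
  have hTimg : T = image (T.orderEmbOfFin hcard) univ := by
    apply Finset.coe_injective
    rw [coe_image, coe_univ, Set.image_univ, range_orderEmbOfFin]
  have hlt : ∀ i', T.orderEmbOfFin hcard i' < d :=
    fun i' => mem_range.mp (hsub (orderEmbOfFin_mem T hcard i'))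
  have h2 := ngap_eq _ (T.orderEmbOfFin hcard).strictMono hlt i
  rw [← hTimg] at h2
  exact h2

noncomputable def fwdMap (d k : ℕ) (T : Finset ℕ) : Σ _ : Fin (k+1) → ℕ, ℕ :=
  if h : T.card = k + 1 then
    ⟨fun i => ngap d T (T.orderEmbOfFin h (i - 1)), T.orderEmbOfFin h 0⟩
  else ⟨fun _ => 0, 0⟩

set_option maxHeartbeats 2000000 in
lemma ngap_sum_eq_Wgt (α : ℕ → R) (d k : ℕ) (hd : d ≠ 0) :
    ∑ T ∈ (range d).powersetCard (k+1), ∏ t ∈ T, α (ngap d T t) = Wgt α d k := by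
  have hW : Wgt α d k =
      ∑ p ∈ (comps d (k+1)).sigma (fun c => range (c 0)), ∏ i, α (p.1 i) := by
    unfold Wgt
    have hc : ∀ c ∈ comps d (k+1), (c 0 : R) * ∏ i, α (c i)
        = ∑ j ∈ range (c 0), ∏ i, α (c i) := by
      intro c _
      rw [Finset.sum_const, card_range, nsmul_eq_mul]
    rw [Finset.sum_congr rfl hc, Finset.sum_sigma']
  rw [hW]
  refine Finset.sum_bij' (fun T _ => fwdMap d k T)
    (fun p _ => image (qfun k p.1 p.2) univ) ?_ ?_ ?_ ?_ ?_
  · -- forward membership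
    intro T hT
    obtain ⟨hsub, hcard⟩ := mem_powersetCard.mp hT
    simp only [fwdMap]
    rw [dif_pos hcard]
    set s := T.orderEmbOfFin hcard with hs
    have hlt : ∀ i', s i' < d := fun i' => mem_range.mp (hsub (orderEmbOfFin_mem T hcard i'))
    have hmono : StrictMono s := s.strictMono
    have hgap := ngap_orderEmb T hsub hcard
    rw [← hs] at hgap
    rw [mem_sigma, mem_comps]
    dsimp only
    have hlast : ngap d T (s (Fin.last k)) = d + s 0 - s (Fin.last k) := by
      rw [hgap (Fin.last k), dif_neg (by simp)]
    refine ⟨⟨?_, ?_⟩, ?_⟩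
    · -- positivity
      intro i
      rw [hgap (i - 1)]
      split_ifs with h
      · have := hmono (show (i-1) < ⟨(i-1).val+1, h⟩ by simp [Fin.lt_def])
        omega
      · have h1 : s 0 ≤ s (i-1) := hmono.monotone (Fin.zero_le _)
        have := hlt (i-1)
        omega
    · -- sum = d
      have hre : ∑ i, ngap d T (s (i - 1)) = ∑ i, ngap d T (s i) :=
        Fintype.sum_equiv (Equiv.subRight (1 : Fin (k+1)))
          (fun i => ngap d T (s (i - 1))) (fun i => ngap d T (s i)) (fun i => rfl)
      rw [hre]
      have hsplit : ∑ i, ngap d T (s i)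
          = (∑ i : Fin k, (s i.succ - s i.castSucc)) + ngap d T (s (Fin.last k)) := by
        rw [Fin.sum_univ_castSucc]
        congr 1
        apply Finset.sum_congr rfl
        intro i _
        have hcond : (i.castSucc : ℕ) + 1 < k + 1 := by
          simp only [Fin.coe_castSucc]; omega
        rw [hgap i.castSucc, dif_pos hcond]
        have hix : (⟨(i.castSucc : ℕ) + 1, hcond⟩ : Fin (k+1)) = i.succ := Fin.ext (by simp)
        rw [hix]
      rw [hsplit, telescope s hmono.monotone, hlast]
      have h1 : s 0 ≤ s (Fin.last k) := hmono.monotone (Fin.zero_le _)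
      have h2 := hlt (Fin.last k)
      omega
    · -- j < c 0
      rw [mem_range, fin_zero_sub_one, hlast]
      have h1 : s 0 ≤ s (Fin.last k) := hmono.monotone (Fin.zero_le _)
      have h2 := hlt (Fin.last k)
      omega
  · -- backward membership
    intro p hp
    rw [mem_sigma, mem_comps] at hp
    obtain ⟨⟨hpos, hsum⟩, hj⟩ := hp
    rw [mem_range] at hj
    rw [mem_powersetCard]
    constructor
    · intro x hx
      obtain ⟨i, _, rfl⟩ := mem_image.mp hx
      exact mem_range.mpr (qfun_lt hpos hsum hj i)
    · rw [Finset.card_image_of_injective _ (qfun_mono hpos p.2).injective, card_univ,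
        Fintype.card_fin]
  · -- left inverse
    intro T hT
    obtain ⟨hsub, hcard⟩ := mem_powersetCard.mp hT
    simp only [fwdMap]
    rw [dif_pos hcard]
    dsimp only
    set s := T.orderEmbOfFin hcard with hs
    have hlt : ∀ i', s i' < d := fun i' => mem_range.mp (hsub (orderEmbOfFin_mem T hcard i'))
    have hmono : StrictMono s := s.strictMono
    have hgap := ngap_orderEmb T hsub hcard
    rw [← hs] at hgap
    have hq : ∀ m (h : m < k + 1),
        qfun k (fun i => ngap d T (s (i - 1))) (s 0) ⟨m, h⟩ = s ⟨m, h⟩ := by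
      intro m
      induction m with
      | zero =>
        intro h
        have h0 : (⟨0, h⟩ : Fin (k+1)) = 0 := rfl
        rw [h0, qfun_zero]
      | succ m ih =>
        intro h
        have hm : m < k + 1 := by omega
        rw [qfun_succ _ _ _ m h, ih hm, fin_succ_sub_one m h,
          hgap ⟨m, hm⟩, dif_pos (by simpa using h)]
        have hix : (⟨((⟨m, hm⟩ : Fin (k+1)) : ℕ) + 1, by simpa using h⟩ : Fin (k+1))
            = ⟨m + 1, h⟩ := Fin.ext rfl
        rw [hix]
        have := hmono (show (⟨m, hm⟩ : Fin (k+1)) < ⟨m+1, h⟩ by simp [Fin.lt_def])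
        omega
    have hfun : qfun k (fun i => ngap d T (s (i - 1))) (s 0) = s := by
      funext i
      have := hq i.val i.isLt
      simpa using this
    rw [hfun]
    apply Finset.coe_injective
    rw [coe_image, coe_univ, Set.image_univ, range_orderEmbOfFin]
  · -- right inverse
    intro p hp
    rw [mem_sigma, mem_comps] at hp
    obtain ⟨⟨hpos, hsum⟩, hj⟩ := hp
    rw [mem_range] at hj
    obtain ⟨c, j⟩ := p
    dsimp only at *
    set q := qfun k c j with hqdef
    have hmono : StrictMono q := qfun_mono hpos j
    have hqlt : ∀ i, q i < d := fun i => qfun_lt hpos hsum hj i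
    have hcard' : (image q univ).card = k + 1 := by
      rw [Finset.card_image_of_injective _ hmono.injective, card_univ, Fintype.card_fin]
    have hsemb : q = (image q univ).orderEmbOfFin hcard' :=
      orderEmbOfFin_unique hcard' (fun x => mem_image_of_mem q (mem_univ x)) hmono
    have hgap : ∀ i : Fin (k+1), ngap d (image q univ) (q i)
        = if h : (i : ℕ) + 1 < k + 1 then q ⟨(i:ℕ)+1, h⟩ - q i else d + q 0 - q i :=
      ngap_eq q hmono hqlt
    have hkey : ∀ i : Fin (k+1), ngap d (image q univ) (q (i - 1)) = c i := by
      intro i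
      rw [hgap (i - 1)]
      split_ifs with h
      · -- i - 1 is not the last index
        have hv : ((i - 1) + 1).val = (i - 1).val + 1 :=
          Fin.val_add_one_of_lt (by rw [Fin.lt_def, Fin.val_last]; omega)
        have h2 : (i - 1) + 1 = i := sub_add_cancel i 1
        have hi : i = ⟨(i - 1).val + 1, h⟩ := by
          apply Fin.ext
          conv_lhs => rw [← h2]
          rw [hv]
        have hsucc := qfun_succ k c j (i-1).val h
        rw [← hqdef] at hsucc
        have heq1 : (⟨(i-1).val, by omega⟩ : Fin (k+1)) = i - 1 := Fin.ext rfl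
        rw [heq1] at hsucc
        conv_rhs => rw [hi]
        rw [hsucc]
        omega
      · -- i - 1 is the last index, so i = 0
        have hlast : i - 1 = Fin.last k := by
          apply Fin.ext
          have := (i - 1).isLt
          simp only [Fin.val_last]
          omega
        have hi0 : i = 0 := by
          rw [show i = (i - 1) + 1 from (sub_add_cancel i 1).symm, hlast, Fin.last_add_one]
        have hql := (qfun_last (k := k) hsum j).2
        have hc0d := (qfun_last (k := k) hsum j).1
        rw [hlast, hi0]
        rw [← hqdef] at hql
        have hq0 : q 0 = j := by rw [hqdef, qfun_zero]
        rw [hql, hq0]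
        omega
    have hq0 : q 0 = j := by rw [hqdef, qfun_zero]
    simp only [fwdMap]
    rw [dif_pos hcard']
    refine Sigma.ext ?_ (heq_of_eq ?_)
    · dsimp only
      funext i
      rw [← hsemb]
      exact hkey i
    · dsimp only
      rw [← hsemb, hq0]
  · -- value equality
    intro T hT
    obtain ⟨hsub, hcard⟩ := mem_powersetCard.mp hT
    simp only [fwdMap]
    rw [dif_pos hcard]
    dsimp only
    set s := T.orderEmbOfFin hcard with hs
    have hTimg : T = image s univ := by
      apply Finset.coe_injective
      rw [coe_image, coe_univ, Set.image_univ, range_orderEmbOfFin]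
    conv_lhs => rw [hTimg]
    rw [Finset.prod_image (fun x _ y _ h => s.injective h), ← hTimg]
    exact Fintype.prod_equiv (Equiv.addRight (1 : Fin (k+1)))
      (fun x => α (ngap d T (s x))) (fun i => α (ngap d T (s (i - 1))))
      (fun x => by simp)

end mainbij

lemma Wgt_zero {R : Type*} [CommRing R] (α : ℕ → R) (k : ℕ) : Wgt α 0 k = 0 := by
  apply Finset.sum_eq_zero
  intro c hc
  exfalso
  rw [mem_comps] at hc
  have h1 := hc.1 0
  have h3 := hc.2
  have h4 := Finset.single_le_sum (f := c) (fun i _ => Nat.zero_le _) (mem_univ 0)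
  omega


open PowerSeries in
/-- With `f(t) = Σ_{i ≥ 1} α_i t^i`, we have
`Σ_{d ≥ k} γ_{d,k} t^d = t · f′(t) · f(t)^{k-1}` as formal power series.
(Note `γ_{d,k} = 0` for `0 < d < k`, so summing over all `d` is the same.) -/
theorem cyclic_composition_genfun {R : Type*} [CommRing R] (α : ℕ → R) (k : ℕ) (hk : 1 ≤ k)
    (f : R⟦X⟧) (hf : f = mk fun i => if i = 0 then 0 else α i) :
    mk (fun d => cycCompSum α d k) = X * (derivative R f) * f ^ (k - 1) := by
  obtain ⟨K, rfl⟩ : ∃ K, k = K + 1 := ⟨k - 1, by omega⟩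
  rw [show K + 1 - 1 = K from rfl, ← Wgt_genfun α f hf K]
  ext d
  rw [coeff_mk, coeff_mk]
  by_cases hd : d = 0
  · subst hd
    rw [cycCompSum, dif_pos rfl, Wgt_zero]
  · rw [cycCompSum_eq_ngap α (K+1) hd, ngap_sum_eq_Wgt α d K hd]
end

section
/- For d ≥ k ≥ 1, d · Σ_{(a_1,…,a_k)} C_{a_1−1}·C_{a_2−1}⋯C_{a_k−1} = k · binomial(2d−k−1, d−1), where the sum is over all compositions (a_1,…,a_k) of d into k parts. -/
open Finset PowerSeries

/-- The generating function of the Catalan numbers. -/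
noncomputable def catGF : PowerSeries ℕ := PowerSeries.mk catalan

/-- `X` times the Catalan generating function, whose `n`-th coefficient is `catalan (n-1)`. -/
noncomputable def bGF : PowerSeries ℕ := PowerSeries.X * catGF

lemma catGF_eq : catGF = 1 + PowerSeries.X * (catGF * catGF) := by
  ext n
  cases n with
  | zero => simp [catGF]
  | succ n =>
    rw [map_add, coeff_succ_X_mul, coeff_mul, catGF, coeff_mk, catalan_succ']
    simp [coeff_one]

lemma bGF_eq : bGF = PowerSeries.X + bGF * bGF := by
  conv_lhs => rw [bGF, catGF_eq]
  rw [bGF]; ring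

lemma coeff_bGF (n : ℕ) : PowerSeries.coeff (n + 1) bGF = catalan n := by
  rw [bGF, coeff_succ_X_mul, catGF, coeff_mk]

lemma coeff_bGF_zero : PowerSeries.coeff 0 bGF = 0 := by
  simp [bGF]

lemma coeff_bGF' {n : ℕ} (h : 1 ≤ n) : PowerSeries.coeff n bGF = catalan (n - 1) := by
  obtain ⟨m, rfl⟩ : ∃ m, n = m + 1 := ⟨n - 1, by omega⟩
  simp [coeff_bGF]

/-- `Sc d k` is the `d`-th coefficient of `bGF ^ k`, i.e. the sum over compositions of `d`
into `k` parts of products of Catalan numbers. -/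
noncomputable def Sc (d k : ℕ) : ℕ := PowerSeries.coeff d (bGF ^ k)

lemma Sc_rec (d k : ℕ) : Sc (d+1) (k+1) = Sc d k + Sc (d+1) (k+2) := by
  unfold Sc
  have h : bGF ^ (k+1) = PowerSeries.X * bGF ^ k + bGF ^ (k+2) := by
    calc bGF ^ (k+1) = bGF ^ k * bGF := pow_succ _ _
      _ = bGF ^ k * (PowerSeries.X + bGF * bGF) := by rw [← bGF_eq]
      _ = PowerSeries.X * bGF ^ k + bGF ^ (k+2) := by ring
  rw [h, map_add, coeff_succ_X_mul]

lemma Sc_diag (d : ℕ) : Sc d d = 1 := by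
  unfold Sc bGF
  rw [mul_pow]
  have h := coeff_X_pow_mul (catGF ^ d) d 0
  rw [zero_add] at h
  rw [h, coeff_zero_eq_constantCoeff, map_pow]
  simp [catGF]

lemma Sc_zero {d : ℕ} (hd : 1 ≤ d) : Sc d 0 = 0 := by
  unfold Sc
  rw [pow_zero, coeff_one, if_neg (by omega)]

lemma choose_decr {n r : ℕ} (h : n ≤ 2 * r + 1) : n.choose (r + 1) ≤ n.choose r := by
  rcases le_or_gt n r with h1 | h1
  · rw [Nat.choose_eq_zero_of_lt (by omega)]
    exact Nat.zero_le _
  · have key := Nat.choose_succ_right_eq n r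
    have h2 : n - r ≤ r + 1 := by omega
    have : n.choose (r+1) * (r+1) ≤ n.choose r * (r+1) :=
      key ▸ Nat.mul_le_mul_left _ h2
    exact Nat.le_of_mul_le_mul_right this (by omega)

lemma Sc_closed : ∀ d, 1 ≤ d → ∀ j k, k + j = d →
    Sc d k = (2*d-k-1).choose (d-1) - (2*d-k-1).choose d := by
  intro d
  induction d using Nat.strong_induction_on with
  | _ d IH =>
    intro hd j
    induction j with
    | zero =>
      intro k hk
      have hk' : k = d := by omega
      subst hk'
      rw [Sc_diag]
      have h1 : 2*k-k-1 = k-1 := by omega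
      rw [h1, Nat.choose_self, Nat.choose_eq_zero_of_lt (by omega)]
    | succ j IHj =>
      intro k hk
      rcases Nat.eq_zero_or_pos k with rfl | hk1
      · rw [Sc_zero (by omega)]
        have h1 : 2*d-0-1 = 2*d-1 := by omega
        have h2 : (2*d-1).choose (d-1) = (2*d-1).choose d := by
          have := Nat.choose_symm (n := 2*d-1) (k := d) (by omega)
          have he : 2*d-1-d = d-1 := by omega
          rw [he] at this
          omega
        rw [h1]
        omega
      · obtain ⟨k', rfl⟩ : ∃ k', k = k' + 1 := ⟨k - 1, by omega⟩
        obtain ⟨d', rfl⟩ : ∃ d', d = d' + 1 := ⟨d - 1, by omega⟩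
        have hd1 : 1 ≤ d' := by omega
        have hkd : k' + 1 ≤ d' := by omega
        rw [Sc_rec]
        rw [IH d' (by omega) hd1 (d' - k') k' (by omega)]
        rw [IHj (k' + 2) (by omega)]
        set n := 2*d' - k' - 1 with hn
        have e1 : 2*(d'+1)-(k'+1)-1 = n + 1 := by omega
        have e3 : 2*(d'+1)-(k'+2)-1 = n := by omega
        have e4 : d' + 1 - 1 = d' := by omega
        have e5 : d' - 1 + 1 = d' := by omega
        rw [e1, e3, e4]
        have p1 : (n+1).choose d' = n.choose (d'-1) + n.choose d' := by
          conv_lhs => rw [← e5]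
          rw [Nat.choose_succ_succ, Nat.succ_eq_add_one, e5]
        have p2 : (n+1).choose (d'+1) = n.choose d' + n.choose (d'+1) := by
          rw [Nat.choose_succ_succ]
        have m1 : n.choose d' ≤ n.choose (d'-1) := by
          have := choose_decr (n := n) (r := d'-1) (by omega)
          rwa [e5] at this
        have m2 : n.choose (d'+1) ≤ n.choose d' := choose_decr (by omega)
        omega

lemma sum_range_getD (L : List ℕ) : ∑ i ∈ range L.length, L.getD i 0 = L.sum := by
  induction L with
  | nil => simp
  | cons a L ih =>
    rw [List.length_cons, Finset.sum_range_succ', List.sum_cons]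
    simp only [List.getD_cons_succ, List.getD_cons_zero]
    rw [ih, add_comm]

lemma prod_catalan_list (L : List ℕ) (hpos : ∀ a ∈ L, 0 < a) :
    (L.map fun a => catalan (a - 1)).prod
      = ∏ i ∈ range L.length, PowerSeries.coeff (L.getD i 0) bGF := by
  induction L with
  | nil => simp
  | cons a L ih =>
    rw [List.length_cons, Finset.prod_range_succ', List.map_cons, List.prod_cons]
    simp only [List.getD_cons_succ, List.getD_cons_zero]
    rw [ih (fun b hb => hpos b (List.mem_cons_of_mem _ hb)),
      coeff_bGF' (hpos a (List.mem_cons_self (a := a) (l := L))), mul_comm]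

/-- The inverse map from finsupps to compositions. -/
noncomputable def toComp (d k : ℕ) (l : ℕ →₀ ℕ) : Composition d :=
  if h : (∑ i ∈ range k, l i = d ∧ ∀ i ∈ range k, l i ≠ 0) then
    ⟨List.ofFn fun i : Fin k => l i,
      by
        intro a ha
        rw [List.mem_ofFn] at ha
        obtain ⟨i, rfl⟩ := ha
        exact Nat.pos_of_ne_zero (h.2 i (by simp)),
      by
        rw [List.sum_ofFn, Fin.sum_univ_eq_sum_range]
        exact h.1⟩
  else Composition.ones d

lemma bridge (d k : ℕ) :
    ∑ c ∈ Finset.univ.filter (fun c : Composition d => c.length = k),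
      (c.blocks.map fun a => catalan (a - 1)).prod = Sc d k := by
  classical
  unfold Sc
  rw [PowerSeries.coeff_pow]
  rw [← Finset.sum_filter_of_ne (p := fun l : ℕ →₀ ℕ => ∀ i ∈ range k, l i ≠ 0)
    (fun l _ hl i hi => by
      intro h0
      exact hl (Finset.prod_eq_zero hi (by rw [h0, coeff_bGF_zero])))]
  have happly : ∀ (L : List ℕ) (i : ℕ), L.toFinsupp i = L.getD i 0 :=
    fun L i => List.toFinsupp_apply L i
  have hmem : ∀ c : Composition d, c.length = k →
      (∑ i ∈ range k, c.blocks.toFinsupp i = d ∧ ∀ i ∈ range k, c.blocks.toFinsupp i ≠ 0) := by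
    intro c hc
    have hlen : c.blocks.length = k := by rw [c.blocks_length, hc]
    constructor
    · have h1 := sum_range_getD c.blocks
      rw [hlen, c.blocks_sum] at h1
      simpa only [happly] using h1
    · intro i hi
      rw [happly, List.getD_eq_getElem _ _ (by rw [hlen]; exact mem_range.mp hi)]
      exact Nat.pos_iff_ne_zero.mp (c.blocks_pos (List.getElem_mem _))
  refine Finset.sum_nbij' (fun c => c.blocks.toFinsupp) (toComp d k) ?_ ?_ ?_ ?_ ?_
  · -- maps into target
    intro c hc
    rw [Finset.mem_filter] at hc ⊢
    obtain ⟨he, hs⟩ := hmem c hc.2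
    have hlen : c.blocks.length = k := by rw [c.blocks_length, hc.2]
    refine ⟨Finset.mem_finsuppAntidiag.mpr ⟨he, ?_⟩, hs⟩
    intro i hi
    rw [Finsupp.mem_support_iff] at hi
    rw [Finset.mem_range]
    by_contra hik
    exact hi (by rw [happly, List.getD_eq_default _ _ (by omega)])
  · -- maps back into source
    intro l hl
    rw [Finset.mem_filter] at hl ⊢
    rw [Finset.mem_finsuppAntidiag] at hl
    refine ⟨Finset.mem_univ _, ?_⟩
    rw [toComp, dif_pos ⟨hl.1.1, hl.2⟩]
    exact List.length_ofFn (f := fun i : Fin k => l i)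
  · -- left inverse
    intro c hc
    rw [Finset.mem_filter] at hc
    have hlen : c.blocks.length = k := by rw [c.blocks_length, hc.2]
    obtain ⟨he, hs⟩ := hmem c hc.2
    rw [toComp, dif_pos ⟨he, hs⟩]
    ext1
    show List.ofFn (fun i : Fin k => c.blocks.toFinsupp i) = c.blocks
    apply List.ext_getElem
    · rw [List.length_ofFn, hlen]
    · intro i h1 h2
      rw [List.getElem_ofFn]
      rw [happly, List.getD_eq_getElem _ _ h2]
  · -- right inverse
    intro l hl
    rw [Finset.mem_filter, Finset.mem_finsuppAntidiag] at hl
    rw [toComp, dif_pos ⟨hl.1.1, hl.2⟩]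
    ext i
    show (List.ofFn (fun i : Fin k => l i)).toFinsupp i = l i
    rw [happly]
    rcases Nat.lt_or_ge i k with hik | hik
    · rw [List.getD_eq_getElem _ _ (by rw [List.length_ofFn]; exact hik),
        List.getElem_ofFn]
    · rw [List.getD_eq_default _ _ (by rw [List.length_ofFn]; exact hik)]
      by_contra h0
      have := hl.1.2 (Finsupp.mem_support_iff.mpr (Ne.symm h0))
      rw [Finset.mem_range] at this
      omega
  · -- values agree
    intro c hc
    rw [Finset.mem_filter] at hc
    have hlen : c.blocks.length = k := by rw [c.blocks_length, hc.2]
    rw [prod_catalan_list c.blocks (fun a ha => c.blocks_pos ha), hlen]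
    exact Finset.prod_congr rfl fun i _ => by rw [happly]

/-- For `d ≥ k ≥ 1`,
`d · Σ_{(a_1,…,a_k)} C_{a_1-1} ⋯ C_{a_k-1} = k · binomial (2d-k-1) (d-1)`,
where the sum ranges over all compositions `(a_1, …, a_k)` of `d` into `k` parts. -/
theorem composition_catalan_sum (d k : ℕ) (hk : 1 ≤ k) (hkd : k ≤ d) :
    d * ∑ c ∈ Finset.univ.filter (fun c : Composition d => c.length = k),
          (c.blocks.map fun a => catalan (a - 1)).prod
      = k * (2 * d - k - 1).choose (d - 1) := by
  rw [bridge d k, Sc_closed d (by omega) (d - k) k (by omega)]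
  set A := (2*d-k-1).choose (d-1) with hA
  set B := (2*d-k-1).choose d with hB
  have e5 : d - 1 + 1 = d := by omega
  have hBA : B ≤ A := by
    have := choose_decr (n := 2*d-k-1) (r := d-1) (by omega)
    rwa [e5] at this
  have hmul : d * B = (d - k) * A := by
    have key := Nat.choose_succ_right_eq (2*d-k-1) (d-1)
    rw [e5] at key
    have e6 : 2*d-k-1 - (d-1) = d - k := by omega
    rw [e6] at key
    rw [mul_comm d B, ← hA, ← hB] at *
    rw [key]
    ring
  rw [Nat.mul_sub_left_distrib, hmul, ← Nat.sub_mul]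
  have h7 : d - (d - k) = k := by omega
  rw [h7]
end

section
/- For d ≥ k ≥ 1, Σ_𝒫 C_{a_1−1}·C_{a_2−1}⋯C_{a_k−1} = binomial(2d−k−1, d−1), where the sum is over all cyclic compositions 𝒫 of d into k parts with part sizes a_1,…,a_k. -/
open Finset


/-- helper: two ℕ-sets sharing an element `c` and agreeing below `c` have the same `sInf`. -/
lemma sInf_congr_of_agree_below {X Y : Set ℕ} {c : ℕ} (hX : c ∈ X) (hY : c ∈ Y)
    (h : ∀ u ≤ c, (u ∈ X ↔ u ∈ Y)) : sInf X = sInf Y := by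
  have hXne : X.Nonempty := ⟨c, hX⟩
  have hYne : Y.Nonempty := ⟨c, hY⟩
  apply le_antisymm
  · exact Nat.sInf_le ((h _ (Nat.sInf_le hY)).mpr (Nat.sInf_mem hYne))
  · exact Nat.sInf_le ((h _ (Nat.sInf_le hX)).mp (Nat.sInf_mem hXne))

noncomputable def natGap (n : ℕ) (T : Finset ℕ) (t : ℕ) : ℕ :=
  sInf {m : ℕ | 0 < m ∧ (t + m ∈ T ∨ t + m = n)}

def F : ℕ → ℕ → ℕ
  | 0, n => if n = 0 then 1 else 0
  | (k+1), n => ∑ a ∈ Finset.range n, catalan a * F k (n - 1 - a)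

lemma F_zero (n : ℕ) : F 0 n = if n = 0 then 1 else 0 := rfl

lemma F_succ (k n : ℕ) : F (k+1) n = ∑ a ∈ Finset.range n, catalan a * F k (n - 1 - a) := rfl

lemma F_eq_zero_of_lt : ∀ k n, n < k → F k n = 0 := by
  intro k
  induction k with
  | zero => intro n h; omega
  | succ k ih =>
    intro n h
    rw [F_succ]
    apply Finset.sum_eq_zero
    intro a ha
    rw [Finset.mem_range] at ha
    rw [ih (n - 1 - a) (by omega), mul_zero]

lemma F_diag : ∀ n, F n n = 1 := by
  intro n
  induction n with
  | zero => simp [F_zero]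
  | succ n ih =>
    rw [F_succ]
    rw [Finset.sum_eq_single 0]
    · simpa using ih
    · intro a ha hne
      rw [F_eq_zero_of_lt n (n + 1 - 1 - a) (by simp at ha; omega), mul_zero]
    · simp

/-- reflected form of the recursion -/
lemma F_succ' (k n : ℕ) : F (k+1) n = ∑ m ∈ Finset.range n, catalan (n - 1 - m) * F k m := by
  rw [F_succ, ← Finset.sum_range_reflect]
  apply Finset.sum_congr rfl
  intro m hm
  simp only [Finset.mem_range] at hm
  congr 2
  omega

/-- triangle sum swap -/
lemma triangle_swap (M : ℕ) (g : ℕ → ℕ → ℕ) :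
    ∑ a ∈ Finset.range M, ∑ p ∈ Finset.range (a+1), g p (a - p)
      = ∑ p ∈ Finset.range M, ∑ q ∈ Finset.range (M - p), g p q := by
  induction M with
  | zero => simp
  | succ M ih =>
    rw [Finset.sum_range_succ, ih]
    have h2 : ∀ p ∈ Finset.range M, ∑ q ∈ Finset.range (M + 1 - p), g p q
        = ∑ q ∈ Finset.range (M - p), g p q + g p (M - p) := by
      intro p hp
      simp only [Finset.mem_range] at hp
      have : M + 1 - p = (M - p) + 1 := by omega
      rw [this, Finset.sum_range_succ]
    rw [Finset.sum_range_succ (fun p => ∑ q ∈ Finset.range (M + 1 - p), g p q),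
      Finset.sum_congr rfl h2, Finset.sum_add_distrib, Finset.sum_range_succ]
    simp [add_assoc]

lemma F_succ_zero (k : ℕ) : F (k+1) 0 = 0 := by simp [F_succ]

lemma catalan_succ_range (a : ℕ) :
    catalan (a + 1) = ∑ p ∈ Finset.range (a+1), catalan p * catalan (a - p) := by
  rw [catalan_succ', ← Nat.sum_antidiagonal_eq_sum_range_succ (fun x y => catalan x * catalan y)]

/-- the key recurrence `φ = x + φ²` where `φ = x·C(x)`. -/
lemma F_rec (k n : ℕ) : F (k+1) (n+1) = F k n + F (k+2) (n+1) := by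
  have e1 : F (k+1) (n+1) = ∑ a ∈ Finset.range (n+1), catalan a * F k (n - a) := by
    rw [F_succ]; apply Finset.sum_congr rfl; intro a _; norm_num
  rw [e1, Finset.sum_range_succ']
  simp only [catalan_zero, one_mul, Nat.sub_zero]
  have key : ∑ a ∈ Finset.range n, catalan (a+1) * F k (n - (a+1)) = F (k+2) (n+1) := by
    have e2 : ∀ a ∈ Finset.range n, catalan (a+1) * F k (n - (a+1))
        = ∑ p ∈ Finset.range (a+1), catalan p * catalan (a - p) * F k (n - 1 - p - (a - p)) := by
      intro a ha
      simp only [Finset.mem_range] at ha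
      rw [catalan_succ_range, Finset.sum_mul]
      apply Finset.sum_congr rfl
      intro p hp
      simp only [Finset.mem_range] at hp
      have harg : n - (a+1) = n - 1 - p - (a - p) := by omega
      rw [harg]
    rw [Finset.sum_congr rfl e2,
      triangle_swap n (fun p q => catalan p * catalan q * F k (n - 1 - p - q))]
    have e3 : ∀ p ∈ Finset.range n, ∑ q ∈ Finset.range (n - p),
        catalan p * catalan q * F k (n - 1 - p - q) = catalan p * F (k+1) (n - p) := by
      intro p hp
      simp only [Finset.mem_range] at hp
      rw [F_succ, Finset.mul_sum]
      apply Finset.sum_congr rfl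
      intro q hq
      simp only [Finset.mem_range] at hq
      have harg : n - 1 - p - q = n - p - 1 - q := by omega
      rw [harg, mul_assoc]
    rw [Finset.sum_congr rfl e3]
    have e4 : F (k+2) (n+1) = ∑ p ∈ Finset.range (n+1), catalan p * F (k+1) (n - p) := by
      rw [F_succ]; apply Finset.sum_congr rfl; intro p _; norm_num
    rw [e4, Finset.sum_range_succ, Nat.sub_self, F_succ_zero]
    simp
  rw [key, add_comm]

lemma F_closed : ∀ n k, 1 ≤ k → k ≤ n →
    F k n + (2*n - k - 1).choose n = (2*n - k - 1).choose (n-1) := by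
  intro n
  induction n using Nat.strong_induction_on with
  | _ n ihn =>
  suffices h : ∀ t k, 1 ≤ k → k + t = n →
      F k n + (2*n - k - 1).choose n = (2*n - k - 1).choose (n-1) by
    intro k hk hkn; exact h (n - k) k hk (by omega)
  intro t
  induction t with
  | zero =>
    intro k hk hkn
    have hkn' : k = n := by omega
    subst hkn'
    rw [F_diag, show 2*k - k - 1 = k - 1 from by omega,
      Nat.choose_eq_zero_of_lt (by omega), Nat.choose_self]
  | succ t iht =>
    intro k hk hkn
    obtain ⟨a, rfl⟩ : ∃ a, k = a + 1 := ⟨k - 1, by omega⟩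
    rcases a with _ | a
    · -- k = 1, n = t + 2
      obtain rfl : n = t + 2 := by omega
      have hrec := F_rec 0 (t+1)
      rw [F_zero] at hrec
      simp only [if_neg (Nat.succ_ne_zero t), zero_add] at hrec
      have h2 := iht 2 (by norm_num) (by omega)
      rw [show 2*(t+2) - 2 - 1 = 2*t+1 from by omega, show t+2-1 = t+1 from rfl] at h2
      have P1 : (2*t+1+1).choose (t+1+1) = (2*t+1).choose (t+1) + (2*t+1).choose (t+1+1) :=
        Nat.choose_succ_succ' _ _
      have P2 : (2*t+1).choose t + (2*t+1).choose (t+1) = (2*t+1+1).choose (t+1) :=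
        (Nat.choose_succ_succ' _ _).symm
      have sym : (2*t+1).choose (t+1) = (2*t+1).choose t := by
        have := Nat.choose_symm (show t ≤ 2*t+1 by omega)
        rwa [show 2*t+1-t = t+1 from by omega] at this
      rw [show 2*(t+2) - 1 - 1 = 2*t+1+1 from by omega, show t+2-1 = t+1 from rfl,
        show t+2 = t+1+1 from rfl]
      ring_nf at hrec h2 P1 P2 sym ⊢
      omega
    · -- k = a + 2, n = a + t + 3
      obtain rfl : n = a + t + 3 := by omega
      have h1 := ihn (a+t+2) (by omega) (a+1) (by omega) (by omega)
      rw [show 2*(a+t+2) - (a+1) - 1 = a+2*t+2 from by omega,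
        show a+t+2-1 = a+t+1 from rfl] at h1
      have h2 := iht (a+3) (by omega) (by omega)
      rw [show 2*(a+t+3) - (a+3) - 1 = a+2*t+2 from by omega,
        show a+t+3-1 = a+t+2 from rfl] at h2
      have hrec := F_rec (a+1) (a+t+2)
      have P1 : (a+2*t+2+1).choose (a+t+2+1)
          = (a+2*t+2).choose (a+t+2) + (a+2*t+2).choose (a+t+2+1) :=
        Nat.choose_succ_succ' _ _
      have P2 : (a+2*t+2+1).choose (a+t+1+1)
          = (a+2*t+2).choose (a+t+1) + (a+2*t+2).choose (a+t+1+1) :=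
        Nat.choose_succ_succ' _ _
      rw [show 2*(a+t+3) - (a+2) - 1 = a+2*t+2+1 from by omega,
        show a+t+3-1 = a+t+2 from rfl]
      ring_nf at h1 h2 hrec P1 P2 ⊢
      omega

def goodSets (k n : ℕ) : Finset (Finset ℕ) :=
  ((Finset.range n).powersetCard k).filter (0 ∈ ·)

noncomputable def B (k n : ℕ) : ℕ :=
  ∑ T ∈ goodSets k n, ∏ t ∈ T, catalan (natGap n T t - 1)

lemma mem_goodSets {k n : ℕ} {T : Finset ℕ} :
    T ∈ goodSets k n ↔ (T ⊆ Finset.range n ∧ T.card = k) ∧ 0 ∈ T := by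
  simp [goodSets, Finset.mem_powersetCard]

lemma natGap_max {n m : ℕ} {T : Finset ℕ} (hmax : ∀ x ∈ T, x ≤ m) (hmn : m < n) :
    natGap n T m = n - m := by
  have hset : {u : ℕ | 0 < u ∧ (m + u ∈ T ∨ m + u = n)} = {n - m} := by
    ext u
    simp only [Set.mem_setOf_eq, Set.mem_singleton_iff]
    constructor
    · rintro ⟨hu, h | h⟩
      · have := hmax _ h; omega
      · omega
    · rintro rfl
      exact ⟨by omega, Or.inr (by omega)⟩
  rw [natGap, hset, csInf_singleton]

lemma natGap_erase {n m t : ℕ} {T : Finset ℕ} (hm : m ∈ T) (hmax : ∀ x ∈ T, x ≤ m)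
    (hmn : m < n) (htm : t ≠ m) (htle : t ≤ m) :
    natGap n T t = natGap m (T.erase m) t := by
  have htlt : t < m := by omega
  apply sInf_congr_of_agree_below (c := m - t)
  · exact ⟨by omega, Or.inl (by rwa [show t + (m - t) = m from by omega])⟩
  · exact ⟨by omega, Or.inr (by omega)⟩
  · intro u hu
    simp only [Set.mem_setOf_eq, Finset.mem_erase]
    constructor
    · rintro ⟨h0, h | h⟩
      · rcases eq_or_ne (t + u) m with he | he
        · exact ⟨h0, Or.inr (by omega)⟩
        · exact ⟨h0, Or.inl ⟨he, h⟩⟩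
      · omega
    · rintro ⟨h0, ⟨hne, h⟩ | h⟩
      · exact ⟨h0, Or.inl h⟩
      · exact ⟨h0, Or.inl (by rwa [h])⟩

lemma sup_id_mem {T : Finset ℕ} (h : T.Nonempty) : T.sup id ∈ T := by
  obtain ⟨b, hb, he⟩ := Finset.exists_mem_eq_sup T h id
  rw [he]; exact hb

lemma B_one (n : ℕ) : B 1 n = F 1 n := by
  rcases Nat.eq_zero_or_pos n with rfl | hn
  · have hemp : goodSets 1 0 = ∅ := by
      rw [Finset.eq_empty_iff_forall_notMem]
      intro T hT
      rw [mem_goodSets] at hT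
      have := hT.1.1 hT.2
      simp at this
    rw [F_succ_zero, B, hemp, Finset.sum_empty]
  · have hgs : goodSets 1 n = {{0}} := by
      ext T
      rw [mem_goodSets]
      constructor
      · rintro ⟨⟨hsub, hcard⟩, h0⟩
        obtain ⟨a, rfl⟩ := Finset.card_eq_one.mp hcard
        simp only [Finset.mem_singleton] at h0 ⊢
        rw [← h0]
      · rintro h
        simp only [Finset.mem_singleton] at h
        subst h
        refine ⟨⟨?_, rfl⟩, Finset.mem_singleton_self 0⟩
        intro x hx
        simp only [Finset.mem_singleton] at hx
        simp [hx, Finset.mem_range, hn]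
    rw [B, hgs, Finset.sum_singleton, Finset.prod_singleton]
    have hng : natGap n {0} 0 = n := by
      have := natGap_max (T := ({0} : Finset ℕ)) (m := 0) (n := n) (by simp) hn
      simpa using this
    rw [hng, F_succ]
    rw [Finset.sum_eq_single_of_mem (n-1) (by rw [Finset.mem_range]; omega)]
    · rw [show n - 1 - (n-1) = 0 from by omega, F_zero, if_pos rfl, mul_one]
    · intro a ha hne
      rw [Finset.mem_range] at ha
      rw [F_zero, if_neg (by omega), mul_zero]

lemma B_succ (k n : ℕ) (hk : 1 ≤ k) :
    B (k+1) n = ∑ m ∈ Finset.range n, catalan (n - 1 - m) * B k m := by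
  have hrhs : ∑ m ∈ Finset.range n, catalan (n - 1 - m) * B k m
      = ∑ p ∈ (Finset.range n).sigma (fun m => goodSets k m),
          catalan (n - 1 - p.1) * ∏ t ∈ p.2, catalan (natGap p.1 p.2 t - 1) := by
    rw [show (∑ m ∈ Finset.range n, catalan (n - 1 - m) * B k m)
        = ∑ m ∈ Finset.range n, ∑ T' ∈ goodSets k m,
            catalan (n - 1 - m) * ∏ t ∈ T', catalan (natGap m T' t - 1) from
      Finset.sum_congr rfl (fun m _ => by rw [B, Finset.mul_sum])]
    exact Finset.sum_sigma' _ _ _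
  rw [hrhs, B]
  apply Finset.sum_nbij' (i := fun T => (⟨T.sup id, T.erase (T.sup id)⟩ :
      (_ : ℕ) × Finset ℕ)) (j := fun p => insert p.1 p.2)
  · -- hi
    intro T hT
    rw [mem_goodSets] at hT
    obtain ⟨⟨hsub, hcard⟩, h0⟩ := hT
    have hne : T.Nonempty := ⟨0, h0⟩
    set m := T.sup id with hm
    have hmem : m ∈ T := sup_id_mem hne
    have hmax : ∀ x ∈ T, x ≤ m := fun x hx => Finset.le_sup (f := id) hx
    have hm0 : m ≠ 0 := by
      intro hm0
      have h2 : 1 < T.card := by omega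
      obtain ⟨a, ha, b, hb, hab⟩ := Finset.one_lt_card.mp h2
      have := hmax a ha; have := hmax b hb; omega
    refine Finset.mem_sigma.mpr ⟨?_, ?_⟩
    · exact hsub hmem
    · dsimp only
      rw [mem_goodSets]
      refine ⟨⟨?_, ?_⟩, ?_⟩
      · intro x hx
        rw [Finset.mem_erase] at hx
        have := hmax x hx.2
        rw [Finset.mem_range]
        omega
      · rw [Finset.card_erase_of_mem hmem, hcard]
        omega
      · rw [Finset.mem_erase]
        exact ⟨Ne.symm hm0, h0⟩
  · -- hj
    rintro ⟨m, T'⟩ hp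
    rw [Finset.mem_sigma] at hp
    obtain ⟨hm, hT'⟩ := hp
    rw [Finset.mem_range] at hm
    rw [mem_goodSets] at hT' ⊢
    obtain ⟨⟨hsub, hcard⟩, h0⟩ := hT'
    have hmT' : m ∉ T' := fun h => by simpa using Finset.mem_range.mp (hsub h)
    refine ⟨⟨?_, ?_⟩, ?_⟩
    · intro x hx
      rw [Finset.mem_insert] at hx
      rcases hx with rfl | hx
      · exact Finset.mem_range.mpr hm
      · have := Finset.mem_range.mp (hsub hx)
        rw [Finset.mem_range]; omega
    · rw [Finset.card_insert_of_notMem hmT', hcard]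
    · exact Finset.mem_insert_of_mem h0
  · -- left inverse
    intro T hT
    rw [mem_goodSets] at hT
    have hne : T.Nonempty := ⟨0, hT.2⟩
    exact Finset.insert_erase (sup_id_mem hne)
  · -- right inverse
    rintro ⟨m, T'⟩ hp
    rw [Finset.mem_sigma] at hp
    obtain ⟨hm, hT'⟩ := hp
    rw [mem_goodSets] at hT'
    have hmT' : m ∉ T' := fun h => by simpa using Finset.mem_range.mp (hT'.1.1 h)
    have hsup : (insert m T').sup id = m := by
      apply le_antisymm
      · apply Finset.sup_le
        intro b hb
        rw [Finset.mem_insert] at hb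
        rcases hb with rfl | hb
        · exact le_refl _
        · exact le_of_lt (Finset.mem_range.mp (hT'.1.1 hb))
      · exact Finset.le_sup (f := id) (Finset.mem_insert_self m T')
    simp only [hsup, Finset.erase_insert hmT']
  · -- values
    intro T hT
    dsimp only
    rw [mem_goodSets] at hT
    obtain ⟨⟨hsub, hcard⟩, h0⟩ := hT
    have hne : T.Nonempty := ⟨0, h0⟩
    set m := T.sup id with hm
    have hmem : m ∈ T := sup_id_mem hne
    have hmax : ∀ x ∈ T, x ≤ m := fun x hx => Finset.le_sup (f := id) hx
    have hmn : m < n := Finset.mem_range.mp (hsub hmem)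
    rw [← Finset.mul_prod_erase T _ hmem]
    congr 1
    · rw [natGap_max hmax hmn]
      congr 1
      omega
    · apply Finset.prod_congr rfl
      intro t ht
      rw [Finset.mem_erase] at ht
      rw [natGap_erase hmem hmax hmn ht.1 (hmax t ht.2)]

lemma B_eq_F : ∀ k n, B (k+1) n = F (k+1) n := by
  intro k
  induction k with
  | zero => exact B_one
  | succ k ih =>
    intro n
    rw [B_succ (k+1) n (by omega), F_succ']
    apply Finset.sum_congr rfl
    intro m _
    rw [ih]

lemma cycGap_translate (d : ℕ) (S : Finset (ZMod d)) (s c : ZMod d) :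
    cycGap d (S.map (Equiv.addRight c).toEmbedding) (s + c) = cycGap d S s := by
  unfold cycGap
  congr 1
  ext m
  simp only [Set.mem_setOf_eq, Finset.mem_map_equiv, Equiv.addRight_symm,
    Equiv.coe_addRight]
  have : s + c + (m : ZMod d) + -c = s + (m : ZMod d) := by ring
  rw [this]

/-- the embedding of `ZMod d` into `ℕ` by `val`. -/
noncomputable def valEmb (d : ℕ) [NeZero d] : ZMod d ↪ ℕ :=
  ⟨ZMod.val, ZMod.val_injective d⟩

lemma natGap_val (d : ℕ) [NeZero d] (S : Finset (ZMod d)) (h0 : (0 : ZMod d) ∈ S)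
    (s : ZMod d) :
    natGap d (S.map (valEmb d)) s.val = cycGap d S s := by
  have hvlt : s.val < d := ZMod.val_lt s
  have hcast : ((s.val : ℕ) : ZMod d) = s := ZMod.natCast_rightInverse s
  have key0 : ∀ m : ℕ, s + (m : ZMod d) = ((s.val + m : ℕ) : ZMod d) := by
    intro m; rw [Nat.cast_add, hcast]
  have hzero : s + ((d - s.val : ℕ) : ZMod d) = 0 := by
    rw [key0, show s.val + (d - s.val) = d from by omega, ZMod.natCast_self]
  apply sInf_congr_of_agree_below (c := d - s.val)
  · exact ⟨by omega, Or.inr (by omega)⟩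
  · refine ⟨by omega, ?_⟩
    rw [hzero]; exact h0
  · intro u hu
    simp only [Set.mem_setOf_eq]
    rcases eq_or_lt_of_le hu with rfl | hult
    · constructor
      · rintro ⟨h1, _⟩
        refine ⟨h1, ?_⟩
        rw [hzero]; exact h0
      · rintro ⟨h1, _⟩
        exact ⟨h1, Or.inr (by omega)⟩
    · have hud : s.val + u < d := by omega
      have hval : (s + (u : ZMod d)).val = s.val + u := by
        rw [key0, ZMod.val_cast_of_lt hud]
      constructor
      · rintro ⟨h1, h | h⟩
        · refine ⟨h1, ?_⟩
          rw [Finset.mem_map] at h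
          obtain ⟨x, hx, hxe⟩ := h
          have : x = s + (u : ZMod d) := by
            apply ZMod.val_injective
            rw [hval]
            exact hxe
          rwa [← this]
        · omega
      · rintro ⟨h1, h⟩
        refine ⟨h1, Or.inl ?_⟩
        rw [Finset.mem_map]
        exact ⟨s + (u : ZMod d), h, hval⟩


/-- For `d ≥ k ≥ 1`, `Σ_𝒫 C_{a_1-1} ⋯ C_{a_k-1} = binomial (2d-k-1) (d-1)`, where the
sum ranges over all cyclic compositions `𝒫` of `d` into `k` parts. -/
theorem cyclic_composition_catalan_sum (d k : ℕ) [NeZero d] (hk : 1 ≤ k) (hkd : k ≤ d) :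
    ∑ S ∈ (Finset.univ : Finset (ZMod d)).powersetCard k,
        ∏ s ∈ S, catalan (cycGap d S s - 1)
      = (2 * d - k - 1).choose (d - 1) := by
  have hd : 0 < d := Nat.pos_of_ne_zero (NeZero.ne d)
  set g : Finset (ZMod d) → ℕ := fun S => ∏ s ∈ S, catalan (cycGap d S s - 1) with hg
  set P : Finset (Finset (ZMod d)) := (Finset.univ : Finset (ZMod d)).powersetCard k with hP
  set A : ℕ := ∑ S ∈ P.filter (fun S => (0 : ZMod d) ∈ S), g S with hA
  -- step 1: translation invariance
  have step1 : ∀ c : ZMod d,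
      ∑ S ∈ P.filter (fun S => c ∈ S), g S = A := by
    intro c
    rw [hA]
    apply Finset.sum_nbij' (i := fun S => S.map (Equiv.addRight (-c)).toEmbedding)
      (j := fun S => S.map (Equiv.addRight c).toEmbedding)
    · intro S hS
      rw [Finset.mem_filter, Finset.mem_powersetCard_univ] at hS ⊢
      refine ⟨by rw [Finset.card_map, hS.1], ?_⟩
      rw [Finset.mem_map_equiv]
      simpa using hS.2
    · intro S hS
      rw [Finset.mem_filter, Finset.mem_powersetCard_univ] at hS ⊢
      refine ⟨by rw [Finset.card_map, hS.1], ?_⟩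
      rw [Finset.mem_map_equiv]
      have h0 := hS.2
      simpa using h0
    · intro S _
      have he : (Equiv.addRight (-c)).toEmbedding.trans (Equiv.addRight c).toEmbedding
          = Function.Embedding.refl _ := by
        ext x; simp
      rw [Finset.map_map, he, Finset.map_refl]
    · intro S _
      have he : (Equiv.addRight c).toEmbedding.trans (Equiv.addRight (-c)).toEmbedding
          = Function.Embedding.refl _ := by
        ext x; simp
      rw [Finset.map_map, he, Finset.map_refl]
    · intro S _
      rw [hg]
      dsimp only
      rw [Finset.prod_map]
      apply Finset.prod_congr rfl
      intro s _
      have he : (Equiv.addRight (-c)).toEmbedding s = s + -c := rfl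
      rw [he, cycGap_translate d S s (-c)]
  -- step 2: k * LHS = d * A
  have step2 : k * (∑ S ∈ P, g S) = d * A := by
    calc k * ∑ S ∈ P, g S = ∑ S ∈ P, k * g S := Finset.mul_sum _ _ _
    _ = ∑ S ∈ P, ∑ _s ∈ S, g S := by
        apply Finset.sum_congr rfl
        intro S hS
        rw [Finset.sum_const, smul_eq_mul]
        rw [Finset.mem_powersetCard_univ] at hS
        rw [hS]
    _ = ∑ S ∈ P, ∑ s ∈ Finset.univ, if s ∈ S then g S else 0 := by
        apply Finset.sum_congr rfl
        intro S _
        rw [Finset.sum_ite_mem, Finset.univ_inter]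
    _ = ∑ s ∈ Finset.univ, ∑ S ∈ P, if s ∈ S then g S else 0 := Finset.sum_comm
    _ = ∑ s ∈ (Finset.univ : Finset (ZMod d)), ∑ S ∈ P.filter (fun S => s ∈ S), g S := by
        apply Finset.sum_congr rfl
        intro s _
        rw [Finset.sum_filter]
    _ = ∑ _s ∈ (Finset.univ : Finset (ZMod d)), A := by
        apply Finset.sum_congr rfl
        intro s _
        exact step1 s
    _ = d * A := by
        rw [Finset.sum_const, smul_eq_mul, Finset.card_univ, ZMod.card]
  -- step 3: A = B k d
  have step3 : A = B k d := by
    rw [hA, B]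
    apply Finset.sum_nbij' (i := fun S => S.map (valEmb d))
      (j := fun T => T.image (Nat.cast : ℕ → ZMod d))
    · intro S hS
      rw [Finset.mem_filter, Finset.mem_powersetCard_univ] at hS
      rw [mem_goodSets]
      refine ⟨⟨?_, by rw [Finset.card_map, hS.1]⟩, ?_⟩
      · intro x hx
        rw [Finset.mem_map] at hx
        obtain ⟨y, _, rfl⟩ := hx
        exact Finset.mem_range.mpr (ZMod.val_lt y)
      · rw [Finset.mem_map]
        exact ⟨0, hS.2, ZMod.val_zero⟩
    · intro T hT
      rw [mem_goodSets] at hT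
      obtain ⟨⟨hsub, hcard⟩, h0⟩ := hT
      rw [Finset.mem_filter, Finset.mem_powersetCard_univ]
      have hinj : Set.InjOn (Nat.cast : ℕ → ZMod d) T := by
        intro a ha b hb hab
        rw [Finset.mem_coe] at ha hb
        have ha' := Finset.mem_range.mp (hsub ha)
        have hb' := Finset.mem_range.mp (hsub hb)
        rw [← ZMod.val_cast_of_lt ha', ← ZMod.val_cast_of_lt hb', hab]
      constructor
      · rw [Finset.card_image_of_injOn hinj, hcard]
      · rw [Finset.mem_image]
        exact ⟨0, h0, Nat.cast_zero⟩
    · intro S _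
      ext x
      simp only [Finset.mem_image, Finset.mem_map, valEmb, Function.Embedding.coeFn_mk]
      constructor
      · rintro ⟨u, ⟨y, hy, rfl⟩, rfl⟩
        rwa [ZMod.natCast_rightInverse y]
      · intro hx
        exact ⟨x.val, ⟨x, hx, rfl⟩, ZMod.natCast_rightInverse x⟩
    · intro T hT
      rw [mem_goodSets] at hT
      ext u
      simp only [Finset.mem_map, Finset.mem_image, valEmb, Function.Embedding.coeFn_mk]
      constructor
      · rintro ⟨x, ⟨t, ht, rfl⟩, rfl⟩
        rwa [ZMod.val_cast_of_lt (Finset.mem_range.mp (hT.1.1 ht))]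
      · intro hu
        exact ⟨(u : ZMod d), ⟨u, hu, rfl⟩,
          ZMod.val_cast_of_lt (Finset.mem_range.mp (hT.1.1 hu))⟩
    · intro S hS
      rw [Finset.mem_filter] at hS
      rw [hg]
      dsimp only
      rw [Finset.prod_map]
      apply Finset.prod_congr rfl
      intro s _
      have : (valEmb d) s = s.val := rfl
      rw [this, natGap_val d S hS.2 s]
  -- step 4: arithmetic conclusion
  have hBF : B k d = F k d := by
    obtain ⟨k', rfl⟩ : ∃ k', k = k' + 1 := ⟨k - 1, by omega⟩
    exact B_eq_F k' d
  have hclosed := F_closed d k hk hkd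
  have hchoose : (2*d - k - 1).choose d * d = (2*d - k - 1).choose (d-1) * (d - k) := by
    have h := Nat.choose_succ_right_eq (2*d - k - 1) (d - 1)
    rwa [show d - 1 + 1 = d from by omega, show 2*d - k - 1 - (d - 1) = d - k from by omega]
      at h
  have key : d * F k d = k * (2*d - k - 1).choose (d-1) := by
    have e5 : d * F k d + d * (2*d - k - 1).choose d = d * (2*d - k - 1).choose (d-1) := by
      rw [← Nat.mul_add, hclosed]
    have e6 : d * (2*d - k - 1).choose d = (d - k) * (2*d - k - 1).choose (d-1) := by
      rw [Nat.mul_comm, hchoose, Nat.mul_comm]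
    have e7 : d * (2*d - k - 1).choose (d-1)
        = (d - k) * (2*d - k - 1).choose (d-1) + k * (2*d - k - 1).choose (d-1) := by
      rw [← Nat.add_mul, show d - k + k = d from by omega]
    omega
  have final : k * (∑ S ∈ P, g S) = k * (2*d - k - 1).choose (d-1) := by
    rw [step2, step3, hBF, key]
  exact Nat.eq_of_mul_eq_mul_left (by omega) final
end
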